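/- arXiv:2212.12458 — 6 statements merged into one kernel-verified Lean document; each statement's English description precedes it below -/
import Mathlib

section
/- Let K be a field, let M be an n × m matrix over K of rank exactly l, and suppose M has an invertible l × l submatrix N with row set u₁ and column set u₂. Then for any row index α ∉ u₁ and column index i ∉ u₂, the entry M(α, i) equals Σ_{β ∈ u₁, j ∈ u₂} M(α, j) · (N⁻¹)(j, β) · M(β, i). -/
open Matrix Submodule Module

/-- Rank-`l` matrix completion identity: if `M` has rank exactly `l` and `N` is an
invertible `l × l` submatrix of `M` with rows `r` and columns `c`, then every entry
of `M` outside those rows and columns is given by bordering: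
`M α i = ∑ j β, M α (c j) * N⁻¹ j β * M (r β) i`. -/
theorem matrix_completion {K : Type*} [Field K] {n m l : ℕ}
    (M : Matrix (Fin n) (Fin m) K) (hrank : M.rank = l)
    (r : Fin l → Fin n) (c : Fin l → Fin m)
    (hr : Function.Injective r) (hc : Function.Injective c)
    (N : Matrix (Fin l) (Fin l) K) (hN : N = M.submatrix r c)
    (hNunit : IsUnit N.det)
    (α : Fin n) (i : Fin m) (hα : α ∉ Set.range r) (hi : i ∉ Set.range c) :
    M α i = ∑ j : Fin l, ∑ β : Fin l, M α (c j) * N⁻¹ j β * M (r β) i := by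
  have hNu : IsUnit N := (Matrix.isUnit_iff_isUnit_det N).mpr hNunit
  -- columns of M selected by c
  set v : Fin l → (Fin n → K) := fun j a => M a (c j) with hv
  -- linear independence of those columns
  have hli : LinearIndependent K v := by
    have h1 : LinearIndependent K (fun j : Fin l => Nᵀ j) :=
      Matrix.linearIndependent_cols_iff_isUnit.mpr hNu
    have : (fun j : Fin l => Nᵀ j) = (LinearMap.funLeft K K r) ∘ v := by
      funext j; funext β; simp [hN, v, Matrix.transpose_apply]
    rw [this] at h1
    exact h1.of_comp _
  -- span of columns of M
  set S : Submodule K (Fin n → K) := Submodule.span K (Set.range Mᵀ) with hS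
  have hfin : finrank K S = l := by
    exact (Matrix.rank_eq_finrank_span_cols (A := M)).symm.trans hrank
  have hvS : ∀ j, v j ∈ S := fun j =>
    Submodule.subset_span ⟨c j, rfl⟩
  have hspan : Submodule.span K (Set.range v) = S := by
    have hle : Submodule.span K (Set.range v) ≤ S :=
      Submodule.span_le.mpr (Set.range_subset_iff.mpr hvS)
    apply Submodule.eq_of_le_of_finrank_le hle
    rw [hfin, finrank_span_eq_card hli, Fintype.card_fin]
  have hwS : (fun a => M a i) ∈ S := Submodule.subset_span ⟨i, rfl⟩
  rw [← hspan, mem_span_range_iff_exists_fun] at hwS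
  obtain ⟨g, hg⟩ := hwS
  -- the coefficients satisfy N *ᵥ g = (fun β => M (r β) i)
  have hNg : ∀ β, ∑ j, g j * N β j = M (r β) i := by
    intro β
    have := congrFun hg (r β)
    simpa [v, hN, Finset.sum_apply, mul_comm] using this
  have hgval : ∀ j, g j = ∑ β, N⁻¹ j β * M (r β) i := by
    intro j
    have h1 : N *ᵥ g = fun β => M (r β) i := by
      funext β
      simpa [Matrix.mulVec, dotProduct, mul_comm] using hNg β
    have h2 : g = N⁻¹ *ᵥ (fun β => M (r β) i) := by
      rw [← h1, Matrix.mulVec_mulVec, Matrix.nonsing_inv_mul _ hNunit, Matrix.one_mulVec]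
    rw [h2]; simp [Matrix.mulVec, dotProduct]
  have := congrFun hg α
  rw [← this]
  simp only [Finset.sum_apply, Pi.smul_apply, smul_eq_mul, v]
  refine Finset.sum_congr rfl fun j _ => ?_
  rw [hgval j, Finset.sum_mul]
  exact Finset.sum_congr rfl fun β _ => by ring
end

section
/- Let K be a field, d ≥ 1 and l ≥ 0 integers. There exists N (depending only on d and l) such that: for every finite set S and every off-diagonal tensor p : DS^d → K all of whose off-diagonal (l+1)×(l+1) subdeterminants of flattenings vanish, there exists a full tensor p̃ : S^d → K of tensor rank at most N whose restriction to DS^d equals p. -/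
/-- The tensor rank of a `d`-way tensor `t : (Fin d → S) → K`: the least number
of pure tensors summing to `t`. -/
noncomputable def tensorRank {K S : Type*} [CommSemiring K] {d : ℕ}
    (t : (Fin d → S) → K) : ℕ :=
  sInf {r | ∃ v : Fin r → Fin d → S → K, t = fun f => ∑ m, ∏ j, v m j (f j)}

/-- Insert the value `s` in position `i` of the `(d-1)`-tuple `α` to get a
`d`-tuple. -/
def combine {S : Type*} {d : ℕ} (i : Fin d) (α : {j : Fin d // j ≠ i} → S) (s : S) :
    Fin d → S := fun j => if h : j = i then s else α ⟨j, h⟩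


namespace OffDiagAux

variable {K : Type} [Field K]

/-- `t` is a sum of at most `n` pure tensors whose factors vanish outside `A`. -/
def HasRkOn {J S : Type} [Fintype J] [DecidableEq S] (A : Finset S)
    (t : (J → S) → K) (n : ℕ) : Prop :=
  ∃ (r : ℕ) (v : Fin r → J → S → K), r ≤ n ∧
    (∀ m j s, s ∉ A → v m j s = 0) ∧
    ∀ f, t f = ∑ m, ∏ j, v m j (f j)

variable {J S : Type} [Fintype J] [DecidableEq S] {A A' : Finset S}

theorem HasRkOn.mono_n {t : (J → S) → K} {n n' : ℕ} (h : HasRkOn A t n) (hn : n ≤ n') :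
    HasRkOn A t n' := by
  obtain ⟨r, v, hr, hs, he⟩ := h
  exact ⟨r, v, hr.trans hn, hs, he⟩

theorem HasRkOn.mono_A {t : (J → S) → K} {n : ℕ} (h : HasRkOn A t n) (hA : A ⊆ A') :
    HasRkOn A' t n := by
  obtain ⟨r, v, hr, hs, he⟩ := h
  exact ⟨r, v, hr, fun m j s hsA => hs m j s fun hmem => hsA (hA hmem), he⟩

theorem HasRkOn.zero : HasRkOn A (fun _ : J → S => (0 : K)) 0 :=
  ⟨0, fun m => m.elim0, le_refl _, fun m => m.elim0, fun f => by simp⟩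

theorem HasRkOn.add {t₁ t₂ : (J → S) → K} {n₁ n₂ : ℕ}
    (h₁ : HasRkOn A t₁ n₁) (h₂ : HasRkOn A t₂ n₂) :
    HasRkOn A (fun f => t₁ f + t₂ f) (n₁ + n₂) := by
  obtain ⟨r₁, v₁, hr₁, hs₁, he₁⟩ := h₁
  obtain ⟨r₂, v₂, hr₂, hs₂, he₂⟩ := h₂
  refine ⟨r₁ + r₂, fun m => Sum.elim (v₁ ·) (v₂ ·) (finSumFinEquiv.symm m),
    Nat.add_le_add hr₁ hr₂, ?_, ?_⟩
  · intro m j s hsA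
    dsimp only
    rcases finSumFinEquiv.symm m with a | a
    · exact hs₁ a j s hsA
    · exact hs₂ a j s hsA
  · intro f
    dsimp only
    rw [he₁ f, he₂ f]
    have := Equiv.sum_comp (finSumFinEquiv (m := r₁) (n := r₂))
      (fun m => ∏ j, Sum.elim (v₁ ·) (v₂ ·) (finSumFinEquiv.symm m) j (f j))
    rw [← this, Fintype.sum_sum_type]
    simp

theorem HasRkOn.sum {ι : Type} [DecidableEq ι] (u : Finset ι) (t : ι → (J → S) → K) {N : ℕ}
    (h : ∀ b ∈ u, HasRkOn A (t b) N) :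
    HasRkOn A (fun f => ∑ b ∈ u, t b f) (u.card * N) := by
  classical
  induction u using Finset.induction_on with
  | empty => simpa using HasRkOn.zero
  | @insert a u ha ih =>
      have h1 : HasRkOn A (t a) N := h a (Finset.mem_insert_self a u)
      have h2 := ih fun b hb => h b (Finset.mem_insert_of_mem hb)
      have h3 := h1.add h2
      have heq : (fun f => ∑ b ∈ insert a u, t b f) =
          fun f => t a f + ∑ b ∈ u, t b f := funext fun f => Finset.sum_insert ha
      rw [heq, Finset.card_insert_of_notMem ha]
      exact h3.mono_n (by rw [Nat.succ_mul]; omega)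

theorem HasRkOn.eval_zero {t : (J → S) → K} {n : ℕ} (h : HasRkOn A t n)
    (f : J → S) (hf : ∃ j, f j ∉ A) : t f = 0 := by
  obtain ⟨r, v, hr, hs, he⟩ := h
  obtain ⟨j, hj⟩ := hf
  rw [he]
  refine Finset.sum_eq_zero fun m _ => ?_
  exact Finset.prod_eq_zero (Finset.mem_univ j) (hs m j (f j) hj)

theorem HasRkOn.mask {t : (J → S) → K} {n : ℕ} (h : HasRkOn A t n) (hA : A' ⊆ A) :
    ∃ t' : (J → S) → K, HasRkOn A' t' n ∧ ∀ f, (∀ j, f j ∈ A') → t' f = t f := by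
  obtain ⟨r, v, hr, hs, he⟩ := h
  refine ⟨fun f => ∑ m, ∏ j, (if f j ∈ A' then v m j (f j) else 0), ⟨r,
    fun m j s => if s ∈ A' then v m j s else 0, hr, fun m j s hsA => if_neg hsA,
    fun f => rfl⟩, ?_⟩
  intro f hf
  rw [he]
  refine Finset.sum_congr rfl fun m _ => Finset.prod_congr rfl fun j _ => ?_
  rw [if_pos (hf j)]

/-- Lift a low-rank tensor on `{j // j ≠ i}` to `J`, with factor `y` at `i`. -/
theorem HasRkOn.lift [DecidableEq J] (i : J) {q : (({j : J // j ≠ i}) → S) → K} {n : ℕ}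
    (h : HasRkOn A q n) (y : S → K) (hy : ∀ s, s ∉ A → y s = 0) :
    HasRkOn A (fun γ : J → S => q (fun j' => γ j'.val) * y (γ i)) n := by
  obtain ⟨r, v, hr, hs, he⟩ := h
  refine ⟨r, fun m j => if hj : j = i then y else v m ⟨j, hj⟩, hr, ?_, ?_⟩
  · intro m j s hsA
    dsimp only
    by_cases hj : j = i
    · rw [dif_pos hj]; exact hy s hsA
    · rw [dif_neg hj]; exact hs m ⟨j, hj⟩ s hsA
  · intro γ
    dsimp only
    rw [he]
    rw [Finset.sum_mul]
    refine Finset.sum_congr rfl fun m _ => ?_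
    have key : ∀ g : J → K, (∏ j : J, g j) = (∏ j : {j : J // j ≠ i}, g j.val) * g i := by
      intro g
      rw [← Finset.prod_erase_mul (Finset.univ) g (Finset.mem_univ i)]
      congr 1
      exact Finset.prod_subtype (p := fun j => j ≠ i) (Finset.univ.erase i)
        (fun x => by simp [Finset.mem_erase]) g
    rw [key (fun j => (if hj : j = i then y else v m ⟨j, hj⟩) (γ j))]
    congr 1
    · refine Finset.prod_congr rfl fun j' _ => ?_
      rw [dif_neg j'.prop]
    · rw [dif_pos rfl]

end OffDiagAux


namespace OffDiagAux

/-- General version of `combine` for an arbitrary index type. -/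
def comb {S J : Type} [DecidableEq J] (i : J) (α : {j : J // j ≠ i} → S) (s : S) :
    J → S := fun j => if h : j = i then s else α ⟨j, h⟩

variable {S J : Type} [DecidableEq J]

theorem comb_self (i : J) (α : {j : J // j ≠ i} → S) (s : S) : comb i α s i = s :=
  dif_pos rfl

theorem comb_ne (i : J) (α : {j : J // j ≠ i} → S) (s : S) (j : {j : J // j ≠ i}) :
    comb i α s j.val = α j := by
  rw [comb, dif_neg j.prop]

theorem comb_restrict (i : J) (γ : J → S) :
    comb i (fun j' : {j : J // j ≠ i} => γ j'.val) (γ i) = γ := by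
  funext j
  by_cases h : j = i
  · rw [h, comb_self]
  · exact comb_ne i _ (γ i) ⟨j, h⟩

theorem comb_inj_restrict {i : J} {α : {j : J // j ≠ i} → S} {s : S}
    (h : Function.Injective (comb i α s)) : Function.Injective α := by
  intro j₁ j₂ he
  have : comb i α s j₁.val = comb i α s j₂.val := by
    rw [comb_ne, comb_ne, he]
  exact Subtype.ext (h this)

theorem comb_inj_notMem {i : J} {α : {j : J // j ≠ i} → S} {s : S}
    (h : Function.Injective (comb i α s)) (j : {j : J // j ≠ i}) : α j ≠ s := by
  intro he
  have : comb i α s j.val = comb i α s i := by rw [comb_ne, comb_self, he]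
  exact j.prop (h this)

theorem comb_inj {i : J} {α : {j : J // j ≠ i} → S} {s : S}
    (hα : Function.Injective α) (hs : ∀ j, α j ≠ s) :
    Function.Injective (comb i α s) := by
  intro j₁ j₂ he
  by_cases h₁ : j₁ = i <;> by_cases h₂ : j₂ = i
  · rw [h₁, h₂]
  · rw [comb, dif_pos h₁] at he
    rw [comb, dif_neg h₂] at he
    exact absurd he.symm (hs ⟨j₂, h₂⟩)
  · rw [comb, dif_neg h₁] at he
    rw [comb, dif_pos h₂] at he
    exact absurd he (hs ⟨j₁, h₁⟩)
  · rw [comb, dif_neg h₁] at he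
    rw [comb, dif_neg h₂] at he
    exact congrArg Subtype.val (hα he)

theorem comb_mem_of {i : J} {α : {j : J // j ≠ i} → S} {s : S} {A : Finset S}
    [DecidableEq S] (hα : ∀ j, α j ∈ A) (hs : s ∈ A) (j : J) : comb i α s j ∈ A := by
  by_cases h : j = i
  · rw [comb, dif_pos h]; exact hs
  · rw [comb, dif_neg h]; exact hα _

/-- Inserting `e` at `i` and then viewing the result as an insertion at `i'.val`. -/
theorem comb_comb (i : J) (i' : {j : J // j ≠ i})
    (β : {j : {j : J // j ≠ i} // j ≠ i'} → S) (u e : S) :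
    comb i (comb i' β u) e =
      comb i'.val (fun j : {j : J // j ≠ i'.val} =>
        if h : j.val = i then e
        else β ⟨⟨j.val, h⟩, fun hh => j.prop (congrArg Subtype.val hh)⟩) u := by
  funext j
  simp only [comb]
  by_cases hji : j = i
  · have hne : j ≠ i'.val := fun h => i'.prop (by rw [← h, hji])
    rw [dif_pos hji, dif_neg hne, dif_pos hji]
  · by_cases hji' : j = i'.val
    · rw [dif_neg hji, dif_pos hji', dif_pos (Subtype.ext hji' : (⟨j, hji⟩ : {j : J // j ≠ i}) = i')]
    · have hne' : (⟨j, hji⟩ : {j : J // j ≠ i}) ≠ i' := fun h => hji' (congrArg Subtype.val h)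
      rw [dif_neg hji, dif_neg hji', dif_neg hne', dif_neg hji]

variable {K : Type} [Field K]

/-- All off-diagonal `(l+1)×(l+1)` minors of all flattenings (relative to the
ground set `A`) vanish. -/
def Hyp {J S : Type} [DecidableEq J] [DecidableEq S] (A : Finset S)
    (p : (J → S) → K) (l : ℕ) : Prop :=
  ∀ (i : J) (rows : Fin (l + 1) → ({j : J // j ≠ i} → S)) (cols : Fin (l + 1) → S),
    Function.Injective rows → Function.Injective cols →
    (∀ a b, Function.Injective (comb i (rows a) (cols b)) ∧
      ∀ j, comb i (rows a) (cols b) j ∈ A) →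
    (Matrix.of fun a b => p (comb i (rows a) (cols b))).det = 0

theorem Hyp.slice {S : Type} [DecidableEq S] {A : Finset S} {p : (J → S) → K} {l : ℕ}
    (hH : Hyp A p l) (i : J) (e : S) (he : e ∈ A) (A' : Finset S) (hA' : A' ⊆ A)
    (heA' : e ∉ A') :
    Hyp (J := {j : J // j ≠ i}) A' (fun β => p (comb i β e)) l := by
  intro i' rows cols hrows hcols hcond
  set Rows : Fin (l + 1) → ({j : J // j ≠ i'.val} → S) := fun a =>
    (fun j : {j : J // j ≠ i'.val} =>
      if h : j.val = i then e
      else rows a ⟨⟨j.val, h⟩, fun hh => j.prop (congrArg Subtype.val hh)⟩) with hRows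
  have key : ∀ a b, comb i'.val (Rows a) (cols b) = comb i (comb i' (rows a) (cols b)) e :=
    fun a b => (comb_comb i i' (rows a) (cols b) e).symm
  have hRinj : Function.Injective Rows := by
    intro a₁ a₂ hR
    refine hrows (funext fun j => ?_)
    have hv : j.val.val ≠ i'.val := fun h => j.prop (Subtype.ext h)
    have e₁ : Rows a₁ ⟨j.val.val, hv⟩ = rows a₁ j := by
      rw [hRows]; dsimp only; rw [dif_neg j.val.prop]
    have e₂ : Rows a₂ ⟨j.val.val, hv⟩ = rows a₂ j := by
      rw [hRows]; dsimp only; rw [dif_neg j.val.prop]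
    rw [← e₁, ← e₂, hR]
  have hmain := hH i'.val Rows cols hRinj hcols (fun a b => by
    rw [key a b]
    constructor
    · refine comb_inj (hcond a b).1 fun j => ?_
      intro hbad
      exact heA' (hbad ▸ (hcond a b).2 j)
    · exact comb_mem_of (fun j => hA' ((hcond a b).2 j)) he)
  have : (Matrix.of fun a b => p (comb i'.val (Rows a) (cols b)))
      = Matrix.of fun a b => p (comb i (comb i' (rows a) (cols b)) e) := by
    ext a b
    rw [Matrix.of_apply, Matrix.of_apply, key a b]
  rw [this] at hmain
  exact hmain

end OffDiagAux


namespace OffDiagAux2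
open OffDiagAux

variable {K : Type} [Field K]
variable {J S : Type} [Fintype J] [DecidableEq J] [DecidableEq S]

/-- Membership facts from the conditions on an off-diagonal submatrix. -/
theorem cond_row_mem {A : Finset S} {i : J} {r : ℕ} {R : Fin r → ({j : J // j ≠ i} → S)}
    {C : Fin r → S}
    (hRC : ∀ a b, Function.Injective (comb i (R a) (C b)) ∧
      ∀ j, comb i (R a) (C b) j ∈ A) (a : Fin r) (j : {j : J // j ≠ i}) : R a j ∈ A := by
  have := (hRC a a).2 j.val
  rwa [comb_ne] at this

theorem cond_col_mem {A : Finset S} {i : J} {r : ℕ} {R : Fin r → ({j : J // j ≠ i} → S)}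
    {C : Fin r → S}
    (hRC : ∀ a b, Function.Injective (comb i (R a) (C b)) ∧
      ∀ j, comb i (R a) (C b) j ∈ A) (b : Fin r) : C b ∈ A := by
  have := (hRC b b).2 i
  rwa [comb_self] at this

/-- Every admissible `(r+1) × (r+1)` off-diagonal minor vanishes, where `r` is
maximal (bounded by `l`). -/
theorem det_succ_vanish {A : Finset S} {p : (J → S) → K} {l : ℕ} (hH : Hyp A p l)
    (i : J) {r : ℕ} (hrl : r ≤ l)
    (hmaxr : r < l → ¬ ∃ (R : Fin (r+1) → ({j : J // j ≠ i} → S)) (C : Fin (r+1) → S),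
      (∀ a b, Function.Injective (comb i (R a) (C b)) ∧
        ∀ j, comb i (R a) (C b) j ∈ A) ∧
      (Matrix.of fun a b => p (comb i (R a) (C b))).det ≠ 0) :
    ∀ (R' : Fin (r+1) → ({j : J // j ≠ i} → S)) (C' : Fin (r+1) → S),
      (∀ a b, Function.Injective (comb i (R' a) (C' b)) ∧
        ∀ j, comb i (R' a) (C' b) j ∈ A) →
      (Matrix.of fun a b => p (comb i (R' a) (C' b))).det = 0 := by
  intro R' C' hcond
  rcases lt_or_eq_of_le hrl with hlt | heq
  · by_contra hne
    exact hmaxr hlt ⟨R', C', hcond, hne⟩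
  · subst heq
    by_cases hR'inj : Function.Injective R'
    · by_cases hC'inj : Function.Injective C'
      · exact hH i R' C' hR'inj hC'inj hcond
      · obtain ⟨a, b, hab, hne⟩ : ∃ a b, C' a = C' b ∧ a ≠ b := by
          simp only [Function.Injective] at hC'inj
          push_neg at hC'inj
          obtain ⟨a, b, h1, h2⟩ := hC'inj
          exact ⟨a, b, h1, h2⟩
        exact Matrix.det_zero_of_column_eq hne fun k => by
          simp only [Matrix.of_apply]
          rw [hab]
    · obtain ⟨a, b, hab, hne⟩ : ∃ a b, R' a = R' b ∧ a ≠ b := by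
        simp only [Function.Injective] at hR'inj
        push_neg at hR'inj
        obtain ⟨a, b, h1, h2⟩ := hR'inj
        exact ⟨a, b, h1, h2⟩
      exact Matrix.det_zero_of_row_eq hne (by
        funext k
        simp only [Matrix.of_apply]
        rw [hab])

/-- Key spanning identity coming from vanishing bordered determinants. -/
theorem span_step {A : Finset S} {p : (J → S) → K}
    (i : J) {r : ℕ}
    (R : Fin r → ({j : J // j ≠ i} → S)) (C : Fin r → S)
    (hRC : ∀ a b, Function.Injective (comb i (R a) (C b)) ∧
      ∀ j, comb i (R a) (C b) j ∈ A)
    (hdet : (Matrix.of fun a b => p (comb i (R a) (C b))).det ≠ 0)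
    (hmax : ∀ (R' : Fin (r+1) → ({j : J // j ≠ i} → S)) (C' : Fin (r+1) → S),
      (∀ a b, Function.Injective (comb i (R' a) (C' b)) ∧
        ∀ j, comb i (R' a) (C' b) j ∈ A) →
      (Matrix.of fun a b => p (comb i (R' a) (C' b))).det = 0)
    (s : S) (hsA : s ∈ A) (hsC : ∀ b, s ≠ C b) (hsR : ∀ a j, s ≠ R a j)
    (β : {j : J // j ≠ i} → S) (hβinj : Function.Injective β) (hβA : ∀ j, β j ∈ A)
    (hβC : ∀ j b, β j ≠ C b) (hβs : ∀ j, β j ≠ s) :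
    p (comb i β s) = ∑ b,
      ((Matrix.of fun a b => p (comb i (R a) (C b)))⁻¹.mulVec
        (fun a => p (comb i (R a) s))) b * p (comb i β (C b)) := by
  set M : Matrix (Fin r) (Fin r) K := Matrix.of fun a b => p (comb i (R a) (C b)) with hM
  set bv : Fin r → K := fun a => p (comb i (R a) s) with hbv
  set x : Fin r → K := M⁻¹.mulVec bv with hx
  have hMunit : IsUnit M.det := isUnit_iff_ne_zero.mpr hdet
  by_cases hβR : ∃ a, R a = β
  · obtain ⟨a, ha⟩ := hβR
    have hMx : M.mulVec x = bv := by
      rw [hx, Matrix.mulVec_mulVec, Matrix.mul_nonsing_inv M hMunit, Matrix.one_mulVec]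
    have h1 : (M.mulVec x) a = bv a := congrFun hMx a
    have h2 : ∑ b, M a b * x b = bv a := by
      rw [← h1]; rfl
    rw [← ha]
    rw [show p (comb i (R a) s) = bv a from rfl, ← h2]
    exact Finset.sum_congr rfl fun b _ => mul_comm (M a b) (x b)
  · push_neg at hβR
    -- bordered matrix
    set rows2 : Fin r ⊕ Fin 1 → ({j : J // j ≠ i} → S) := Sum.elim R (fun _ => β) with hrows2
    set cols2 : Fin r ⊕ Fin 1 → S := Sum.elim C (fun _ => s) with hcols2
    have hcond2 : ∀ a b, Function.Injective (comb i (rows2 a) (cols2 b)) ∧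
        ∀ j, comb i (rows2 a) (cols2 b) j ∈ A := by
      rintro (a | a) (b | b)
      · exact hRC a b
      · constructor
        · refine comb_inj (comb_inj_restrict (hRC a a).1) fun j h => ?_
          exact hsR a j h.symm
        · exact comb_mem_of (fun j => cond_row_mem hRC a j) hsA
      · constructor
        · exact comb_inj hβinj fun j => hβC j b
        · exact comb_mem_of hβA (cond_col_mem hRC b)
      · constructor
        · exact comb_inj hβinj hβs
        · exact comb_mem_of hβA hsA
    set e : Fin r ⊕ Fin 1 ≃ Fin (r + 1) := finSumFinEquiv with he
    have hdet2 : (Matrix.of fun a b => p (comb i (rows2 a) (cols2 b))).det = 0 := by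
      have h0 := hmax (fun a => rows2 (e.symm a)) (fun b => cols2 (e.symm b))
        (fun a b => hcond2 (e.symm a) (e.symm b))
      have h1 : (Matrix.of fun a b => p (comb i (rows2 (e.symm a)) (cols2 (e.symm b))))
          = (Matrix.of fun a b => p (comb i (rows2 a) (cols2 b))).submatrix e.symm e.symm := rfl
      rw [h1] at h0
      rwa [Matrix.det_submatrix_equiv_self] at h0
    -- express as fromBlocks
    set Bc : Matrix (Fin r) (Fin 1) K := Matrix.of fun a _ => bv a with hBc
    set Cr : Matrix (Fin 1) (Fin r) K := Matrix.of fun _ b => p (comb i β (C b)) with hCr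
    set Dm : Matrix (Fin 1) (Fin 1) K := Matrix.of fun _ _ => p (comb i β s) with hDm
    have hblocks : (Matrix.of fun a b => p (comb i (rows2 a) (cols2 b)))
        = Matrix.fromBlocks M Bc Cr Dm := by
      ext a b
      rcases a with a | a <;> rcases b with b | b <;> rfl
    rw [hblocks] at hdet2
    haveI : Invertible M := M.invertibleOfIsUnitDet hMunit
    rw [Matrix.det_fromBlocks₁₁] at hdet2
    have hdet3 : (Dm - Cr * ⅟M * Bc).det = 0 := by
      rcases mul_eq_zero.mp hdet2 with h | h
      · exact absurd h hdet
      · exact h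
    rw [Matrix.det_fin_one] at hdet3
    have hentry : Dm 0 0 = (Cr * ⅟M * Bc) 0 0 := by
      have h6 : (Dm - Cr * ⅟M * Bc) 0 0 = Dm 0 0 - (Cr * ⅟M * Bc) 0 0 :=
        Matrix.sub_apply _ _ _ _
      rw [h6] at hdet3
      exact sub_eq_zero.mp hdet3
    have hxb : ∀ b, x b = ∑ a, M⁻¹ b a * bv a := fun b => rfl
    have hC : (Cr * ⅟M * Bc) 0 0 = ∑ b, x b * Cr 0 b := by
      rw [Matrix.invOf_eq_nonsing_inv]
      rw [Matrix.mul_apply]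
      calc ∑ a, (Cr * M⁻¹) 0 a * Bc a 0
          = ∑ a, ∑ b, Cr 0 b * M⁻¹ b a * Bc a 0 := by
            refine Finset.sum_congr rfl fun a _ => ?_
            rw [Matrix.mul_apply, Finset.sum_mul]
        _ = ∑ b, ∑ a, Cr 0 b * M⁻¹ b a * Bc a 0 := Finset.sum_comm
        _ = ∑ b, x b * Cr 0 b := by
            refine Finset.sum_congr rfl fun b _ => ?_
            rw [hxb b, Finset.sum_mul]
            refine Finset.sum_congr rfl fun a _ => ?_
            have : Bc a 0 = bv a := rfl
            rw [this]
            ring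
    have : p (comb i β s) = ∑ b, x b * p (comb i β (C b)) := by
      have h4 : Dm 0 0 = p (comb i β s) := rfl
      rw [← h4, hentry, hC]
      rfl
    exact this

end OffDiagAux2


namespace OffDiagAux3
open OffDiagAux OffDiagAux2

variable {K : Type} [Field K]

/-- The rank bound. -/
def Nfun (l : ℕ) : ℕ → ℕ
  | 0 => 1
  | 1 => 1
  | (d + 2) => (l + (l + l * (d + 1)) * (d + 2)) * Nfun l (d + 1)

theorem card_ne (J : Type) [Fintype J] [DecidableEq J] (i : J) :
    Fintype.card {j : J // j ≠ i} = Fintype.card J - 1 := by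
  rw [Fintype.card_subtype_compl, Fintype.card_subtype_eq]

theorem aux (l : ℕ) : ∀ d : ℕ, 1 ≤ d → ∀ (J : Type) [Fintype J] [DecidableEq J],
    Fintype.card J = d → ∀ (S : Type) [DecidableEq S] (A : Finset S) (p : (J → S) → K),
    Hyp A p l → ∃ pt : (J → S) → K, HasRkOn A pt (Nfun l d) ∧
      ∀ γ : J → S, Function.Injective γ → (∀ j, γ j ∈ A) → pt γ = p γ := by
  intro d
  induction d with
  | zero => intro h; exact absurd h (by omega)
  | succ d ih =>
    intro _ J _ _ hJ S _ A p hH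
    by_cases hd0 : d = 0
    · -- base case: card J = 1
      subst hd0
      obtain ⟨j0, hj0⟩ := Fintype.card_eq_one_iff.mp hJ
      classical
      refine ⟨fun γ => if γ j0 ∈ A then p (fun _ => γ j0) else 0,
        ⟨1, fun _ _ s => if s ∈ A then p (fun _ => s) else 0, le_refl _,
          fun m j s hs => if_neg hs, ?_⟩, ?_⟩
      · intro f
        rw [Fin.sum_univ_one]
        rw [Fintype.prod_eq_single j0 (fun x hx => absurd (hj0 x) hx)]
      · intro γ hγinj hγA
        dsimp only
        rw [if_pos (hγA j0)]
        congr 1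
        funext jj
        rw [hj0 jj]
    · have hd1 : 1 ≤ d := Nat.one_le_iff_ne_zero.mpr hd0
      obtain ⟨d', rfl⟩ : ∃ d', d = d' + 1 := ⟨d - 1, by omega⟩
      classical
      have hJpos : 0 < Fintype.card J := by omega
      obtain ⟨i⟩ := Fintype.card_pos_iff.mp hJpos
      have hJ' : Fintype.card {j : J // j ≠ i} = d' + 1 := by
        rw [card_ne, hJ]; omega
      -- maximal invertible off-diagonal submatrix
      obtain ⟨r, hrl, hPr, hmaxr⟩ : ∃ r, r ≤ l ∧
          (∃ (R : Fin r → ({j : J // j ≠ i} → S)) (C : Fin r → S),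
            (∀ a b, Function.Injective (comb i (R a) (C b)) ∧
              ∀ j, comb i (R a) (C b) j ∈ A) ∧
            (Matrix.of fun a b => p (comb i (R a) (C b))).det ≠ 0) ∧
          (r < l → ¬ (∃ (R : Fin (r+1) → ({j : J // j ≠ i} → S)) (C : Fin (r+1) → S),
            (∀ a b, Function.Injective (comb i (R a) (C b)) ∧
              ∀ j, comb i (R a) (C b) j ∈ A) ∧
            (Matrix.of fun a b => p (comb i (R a) (C b))).det ≠ 0)) := by
        set Pn : ℕ → Prop := fun n =>
          ∃ (R : Fin n → ({j : J // j ≠ i} → S)) (C : Fin n → S),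
            (∀ a b, Function.Injective (comb i (R a) (C b)) ∧
              ∀ j, comb i (R a) (C b) j ∈ A) ∧
            (Matrix.of fun a b => p (comb i (R a) (C b))).det ≠ 0 with hPn
        have hP0 : Pn 0 := ⟨fun m => m.elim0, fun m => m.elim0, fun a => a.elim0,
          by rw [Matrix.det_fin_zero]; exact one_ne_zero⟩
        refine ⟨Nat.findGreatest Pn l, Nat.findGreatest_le l,
          Nat.findGreatest_spec (Nat.zero_le l) hP0, fun hlt => ?_⟩
        exact @Nat.findGreatest_is_greatest (Nat.findGreatest Pn l + 1) Pn
          (Classical.decPred Pn) l (by omega) (by omega)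
      obtain ⟨R, C, hRC, hdet⟩ := hPr
      have hmax := det_succ_vanish hH i hrl hmaxr
      have hRA : ∀ a j, R a j ∈ A := fun a j => cond_row_mem hRC a j
      have hCA : ∀ b, C b ∈ A := fun b => cond_col_mem hRC b
      -- the exceptional set
      set Cset : Finset S := Finset.image C Finset.univ with hCset
      set E : Finset S := Cset ∪ Finset.univ.biUnion
        (fun a : Fin r => Finset.image (R a) Finset.univ) with hE
      have hCsetE : Cset ⊆ E := Finset.subset_union_left
      have hEA : E ⊆ A := by
        intro e he
        rw [hE, Finset.mem_union] at he
        rcases he with he | he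
        · obtain ⟨b, _, rfl⟩ := Finset.mem_image.mp he
          exact hCA b
        · obtain ⟨a, _, he2⟩ := Finset.mem_biUnion.mp he
          obtain ⟨j, _, rfl⟩ := Finset.mem_image.mp he2
          exact hRA a j
      have hcardE : E.card ≤ r + r * (d' + 1) := by
        have h1 : Cset.card ≤ r :=
          le_trans Finset.card_image_le (le_of_eq (by simp))
        have h2 : (Finset.univ.biUnion
            fun a : Fin r => Finset.image (R a) Finset.univ).card ≤ r * (d' + 1) := by
          refine le_trans Finset.card_biUnion_le ?_
          calc ∑ a : Fin r, (Finset.image (R a) Finset.univ).card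
              ≤ ∑ _a : Fin r, (d' + 1) := Finset.sum_le_sum (fun a _ =>
                le_trans Finset.card_image_le (le_of_eq (by rw [Finset.card_univ, hJ'])))
            _ = r * (d' + 1) := by simp [Finset.sum_const, mul_comm]
        exact le_trans (Finset.card_union_le _ _) (Nat.add_le_add h1 h2)
      -- the coefficient vectors
      set xv : S → Fin r → K := fun s =>
        (Matrix.of fun a b => p (comb i (R a) (C b)))⁻¹.mulVec
          (fun a => p (comb i (R a) s)) with hxv
      -- completions of the column slices
      have hqb : ∀ b : Fin r, ∃ q : (({j : J // j ≠ i}) → S) → K,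
          HasRkOn (A \ Cset) q (Nfun l (d' + 1)) ∧
          ∀ β, Function.Injective β → (∀ j, β j ∈ A \ Cset) →
            q β = p (comb i β (C b)) := by
        intro b
        refine ih hd1 _ hJ' S (A \ Cset) _ ?_
        exact Hyp.slice hH i (C b) (hCA b) (A \ Cset) (Finset.sdiff_subset)
          (by simp [hCset, Finset.mem_sdiff])
      choose q hq1 hq2 using hqb
      have hsub1 : A \ E ⊆ A \ Cset := Finset.sdiff_subset_sdiff (le_refl A) hCsetE
      have hq' : ∀ b : Fin r, ∃ q' : (({j : J // j ≠ i}) → S) → K,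
          HasRkOn (A \ E) q' (Nfun l (d' + 1)) ∧
          ∀ β, (∀ j, β j ∈ A \ E) → q' β = q b β :=
        fun b => (hq1 b).mask hsub1
      choose q' hq'1 hq'2 using hq'
      set y : Fin r → S → K := fun b s => if s ∈ A \ E then xv s b else 0 with hy
      set Main : (J → S) → K := fun γ =>
        ∑ b : Fin r, q' b (fun j' => γ j'.val) * y b (γ i) with hMain
      have hMainRk : HasRkOn (A \ E) Main (r * Nfun l (d' + 1)) := by
        have := HasRkOn.sum (K := K) (Finset.univ : Finset (Fin r))
          (fun b γ => q' b (fun j' => γ j'.val) * y b (γ i))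
          (fun b _ => (hq'1 b).lift i (y b) (fun s hs => if_neg hs))
        simpa using this
      have hMainAgr : ∀ γ : J → S, Function.Injective γ → (∀ j, γ j ∈ A \ E) →
          Main γ = p γ := by
        intro γ hγinj hγA
        have hsA : γ i ∈ A := (Finset.mem_sdiff.mp (hγA i)).1
        have hsE : γ i ∉ E := (Finset.mem_sdiff.mp (hγA i)).2
        set β : {j : J // j ≠ i} → S := fun j' => γ j'.val with hβ
        have hβinj : Function.Injective β := by
          intro j₁ j₂ hj
          exact Subtype.ext (hγinj hj)
        have hβAE : ∀ j, β j ∈ A \ E := fun j => hγA j.val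
        have hβA : ∀ j, β j ∈ A := fun j => (Finset.mem_sdiff.mp (hβAE j)).1
        have hβE : ∀ j, β j ∉ E := fun j => (Finset.mem_sdiff.mp (hβAE j)).2
        have hβC : ∀ j b, β j ≠ C b := fun j b h => hβE j (hCsetE (by
          rw [hCset]; exact Finset.mem_image.mpr ⟨b, Finset.mem_univ b, h.symm⟩))
        have hβs : ∀ j, β j ≠ γ i := fun j h => j.prop (hγinj h)
        have hsC : ∀ b, γ i ≠ C b := fun b h => hsE (hCsetE (by
          rw [hCset]; exact Finset.mem_image.mpr ⟨b, Finset.mem_univ b, h.symm⟩))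
        have hsR : ∀ a j, γ i ≠ R a j := fun a j h => hsE (by
          rw [hE]
          refine Finset.mem_union_right _ (Finset.mem_biUnion.mpr
            ⟨a, Finset.mem_univ a, Finset.mem_image.mpr ⟨j, Finset.mem_univ j, h.symm⟩⟩))
        have hspan := span_step i R C hRC hdet hmax (γ i) hsA hsC hsR β hβinj hβA hβC hβs
        have hqval : ∀ b, q' b β = p (comb i β (C b)) := by
          intro b
          rw [hq'2 b β hβAE]
          exact hq2 b β hβinj (fun j => hsub1 (hβAE j))
        rw [hMain]
        dsimp only
        have hyval : ∀ b, y b (γ i) = xv (γ i) b := fun b => if_pos (hγA i)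
        calc ∑ b, q' b β * y b (γ i)
            = ∑ b, xv (γ i) b * p (comb i β (C b)) := by
              refine Finset.sum_congr rfl fun b _ => ?_
              rw [hqval b, hyval b]
              ring
          _ = p (comb i β (γ i)) := hspan.symm
          _ = p γ := by rw [comb_restrict]
      -- add back the exceptional elements one at a time
      have hstep : ∀ G : Finset S, G ⊆ E →
          ∃ pt : (J → S) → K,
            HasRkOn ((A \ E) ∪ G) pt
              (r * Nfun l (d' + 1) + G.card * ((d' + 2) * Nfun l (d' + 1))) ∧
            ∀ γ : J → S, Function.Injective γ → (∀ j, γ j ∈ (A \ E) ∪ G) →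
              pt γ = p γ := by
        intro G
        induction G using Finset.induction_on with
        | empty =>
            intro _
            refine ⟨Main, ?_, ?_⟩
            · rw [Finset.union_empty]
              exact hMainRk.mono_n (by simp)
            · intro γ h1 h2
              rw [Finset.union_empty] at h2
              exact hMainAgr γ h1 h2
        | @insert e G heG ihG =>
            intro hsub
            have heE : e ∈ E := hsub (Finset.mem_insert_self e G)
            have hGE : G ⊆ E := fun g hg => hsub (Finset.mem_insert_of_mem hg)
            obtain ⟨pt, hptRk, hptAgr⟩ := ihG hGE
            have heA : e ∈ A := hEA heE
            set B : Finset S := (A \ E) ∪ G with hB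
            have heB : e ∉ B := by
              rw [hB, Finset.mem_union]
              rintro (h | h)
              · exact (Finset.mem_sdiff.mp h).2 heE
              · exact heG h
            have hBA : B ⊆ A := by
              rw [hB]
              exact Finset.union_subset (Finset.sdiff_subset)
                (fun g hg => hEA (hGE hg))
            -- slice completions at e
            have hsl : ∀ j : J, ∃ qe : (({j' : J // j' ≠ j}) → S) → K,
                HasRkOn B qe (Nfun l (d' + 1)) ∧
                ∀ β, Function.Injective β → (∀ j', β j' ∈ B) →
                  qe β = p (comb j β e) := by
              intro j
              refine ih hd1 _ ?_ S B _ ?_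
              · rw [card_ne, hJ]; omega
              · exact Hyp.slice hH j e heA B hBA heB
            choose qe hqe1 hqe2 using hsl
            refine ⟨fun γ => pt γ + ∑ j : J, qe j (fun j' => γ j'.val) *
              (if γ j = e then 1 else 0), ?_, ?_⟩
            · rw [Finset.union_insert, ← hB]
              have h1 : HasRkOn (insert e B) pt
                  (r * Nfun l (d' + 1) + G.card * ((d' + 2) * Nfun l (d' + 1))) :=
                hptRk.mono_A (Finset.subset_insert e B)
              have h2 : HasRkOn (insert e B)
                  (fun γ => ∑ j : J, qe j (fun j' => γ j'.val) *
                    (if γ j = e then 1 else 0))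
                  ((d' + 2) * Nfun l (d' + 1)) := by
                have := HasRkOn.sum (K := K) (Finset.univ : Finset J)
                  (fun j γ => qe j (fun j' => γ j'.val) * (if γ j = e then 1 else 0))
                  (fun j _ => ((hqe1 j).mono_A (Finset.subset_insert e B)).lift j
                    (fun s => if s = e then 1 else 0)
                    (fun s hs => if_neg (fun h => hs (by
                      rw [h]; exact Finset.mem_insert_self e B))))
                have hcard : (Finset.univ : Finset J).card = d' + 2 := by
                  rw [Finset.card_univ, hJ]
                rw [hcard] at this
                exact this
              have h3 := h1.add h2
              refine h3.mono_n ?_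
              rw [Finset.card_insert_of_notMem heG]
              ring_nf
              omega
            · intro γ hγinj hγA
              dsimp only
              rw [Finset.union_insert, ← hB] at hγA
              by_cases hcase : ∀ j, γ j ≠ e
              · have hγB : ∀ j, γ j ∈ B := fun j =>
                  (Finset.mem_insert.mp (hγA j)).resolve_left (hcase j)
                rw [hptAgr γ hγinj hγB]
                have : ∑ j : J, qe j (fun j' => γ j'.val) * (if γ j = e then 1 else 0)
                    = 0 := Finset.sum_eq_zero fun j _ => by
                  rw [if_neg (hcase j), mul_zero]
                rw [this, add_zero]
              · push_neg at hcase
                obtain ⟨j₀, hj₀⟩ := hcase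
                have hpt0 : pt γ = 0 := hptRk.eval_zero γ ⟨j₀, by rw [hj₀]; exact heB⟩
                have hsum : ∑ j : J, qe j (fun j' => γ j'.val) *
                    (if γ j = e then 1 else 0)
                    = qe j₀ (fun j' => γ j'.val) := by
                  rw [Finset.sum_eq_single j₀]
                  · rw [if_pos hj₀, mul_one]
                  · intro j _ hj
                    rw [if_neg (fun h => hj (hγinj (h.trans hj₀.symm))), mul_zero]
                  · intro h; exact absurd (Finset.mem_univ j₀) h
                have hrest : ∀ j' : {j' : J // j' ≠ j₀}, γ j'.val ∈ B := by
                  intro j'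
                  refine (Finset.mem_insert.mp (hγA j'.val)).resolve_left ?_
                  intro h
                  exact j'.prop (hγinj (h.trans hj₀.symm))
                have hrinj : Function.Injective (fun j' : {j' : J // j' ≠ j₀} => γ j'.val) :=
                  fun a b hab => Subtype.ext (hγinj hab)
                rw [hpt0, hsum, zero_add, hqe2 j₀ _ hrinj hrest]
                have : comb j₀ (fun j' : {j' : J // j' ≠ j₀} => γ j'.val) e = γ := by
                  rw [← hj₀]
                  exact comb_restrict j₀ γ
                rw [this]
      -- conclude
      obtain ⟨pt, hptRk, hptAgr⟩ := hstep E (le_refl E)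
      rw [Finset.sdiff_union_of_subset hEA] at hptRk hptAgr
      refine ⟨pt, hptRk.mono_n ?_, hptAgr⟩
      have hN : Nfun l (d' + 2) = (l + (l + l * (d' + 1)) * (d' + 2)) * Nfun l (d' + 1) := rfl
      rw [hN]
      have h1 : r * Nfun l (d' + 1) ≤ l * Nfun l (d' + 1) :=
        Nat.mul_le_mul_right _ hrl
      have h2 : E.card * ((d' + 2) * Nfun l (d' + 1)) ≤
          ((l + l * (d' + 1)) * (d' + 2)) * Nfun l (d' + 1) := by
        have : E.card ≤ l + l * (d' + 1) :=
          le_trans hcardE (Nat.add_le_add hrl (Nat.mul_le_mul_right _ hrl))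
        calc E.card * ((d' + 2) * Nfun l (d' + 1))
            ≤ (l + l * (d' + 1)) * ((d' + 2) * Nfun l (d' + 1)) :=
              Nat.mul_le_mul_right _ this
          _ = ((l + l * (d' + 1)) * (d' + 2)) * Nfun l (d' + 1) := by ring
      calc r * Nfun l (d' + 1) + E.card * ((d' + 2) * Nfun l (d' + 1))
          ≤ l * Nfun l (d' + 1) + ((l + l * (d' + 1)) * (d' + 2)) * Nfun l (d' + 1) :=
            Nat.add_le_add h1 h2
        _ = (l + (l + l * (d' + 1)) * (d' + 2)) * Nfun l (d' + 1) := by ring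

end OffDiagAux3

namespace OffDiagAux
theorem tensorRank_le_of_hasRkOn {K S : Type} [Field K] [DecidableEq S] {d : ℕ}
    (hd : 1 ≤ d) {A : Finset S} {t : (Fin d → S) → K} {N : ℕ}
    (h : HasRkOn A t N) : tensorRank t ≤ N := by
  obtain ⟨r, v, hr, _, he⟩ := h
  refine Nat.sInf_le ⟨fun m j s => if hm : (m : ℕ) < r then v ⟨m, hm⟩ j s else 0, ?_⟩
  funext f
  rw [he f]
  set F : ℕ → K := fun m => if hm : m < r then ∏ j, v ⟨m, hm⟩ j (f j) else 0 with hF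
  have h1 : ∑ m : Fin r, ∏ j, v m j (f j) = ∑ m : Fin r, F (m : ℕ) := by
    refine Finset.sum_congr rfl fun m _ => ?_
    rw [hF]
    dsimp only
    rw [dif_pos m.isLt]
  have h2 : ∀ m : Fin N, (∏ j, if hm : (m : ℕ) < r then v ⟨m, hm⟩ j (f j) else 0)
      = F (m : ℕ) := by
    intro m
    by_cases hm : (m : ℕ) < r
    · rw [hF]
      dsimp only
      rw [dif_pos hm]
      exact Finset.prod_congr rfl fun j _ => dif_pos hm
    · rw [hF]
      dsimp only
      rw [dif_neg hm]
      exact Finset.prod_eq_zero (Finset.mem_univ (⟨0, hd⟩ : Fin d)) (dif_neg hm)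
  rw [h1, Fin.sum_univ_eq_sum_range F r]
  have h3 : ∑ m : Fin N, ∏ j, (fun m (j : Fin d) s =>
      if hm : (m : ℕ) < r then v ⟨m, hm⟩ j s else 0) m j (f j) = ∑ m : Fin N, F (m : ℕ) :=
    Finset.sum_congr rfl fun m _ => h2 m
  rw [h3, Fin.sum_univ_eq_sum_range F N]
  symm
  refine (Finset.sum_subset (Finset.range_subset_range.mpr hr) ?_).symm
  intro x _ hx
  rw [hF]
  dsimp only
  rw [dif_neg (by simpa using hx)]

end OffDiagAux


/-- Tensor completion: for fixed `d ≥ 1` and `l` there exists `N` such that every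
off-diagonal tensor `p : DS^d → K` all of whose off-diagonal
`(l+1)×(l+1)` subdeterminants of flattenings vanish can be completed to a full
tensor `p̃ : S^d → K` of tensor rank at most `N`. -/
theorem offDiag_tensor_completion (K : Type) [Field K] (d l : ℕ) (hd : 1 ≤ d) :
    ∃ N : ℕ, ∀ (S : Type) [Fintype S] [DecidableEq S],
      ∀ p : {α : Fin d → S // Function.Injective α} → K,
      (∀ (i : Fin d) (rows : Fin (l + 1) → ({j : Fin d // j ≠ i} → S))
          (cols : Fin (l + 1) → S),
          Function.Injective rows → Function.Injective cols →
          ∀ hinj : ∀ a b, Function.Injective (combine i (rows a) (cols b)),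
          (Matrix.of fun a b => p ⟨combine i (rows a) (cols b), hinj a b⟩).det = 0) →
      ∃ pt : (Fin d → S) → K, tensorRank pt ≤ N ∧
        ∀ (α : Fin d → S) (h : Function.Injective α), pt α = p ⟨α, h⟩ := by
  classical
  refine ⟨OffDiagAux3.Nfun l d, ?_⟩
  intro S _ _ p hminor
  set p' : (Fin d → S) → K :=
    fun γ => if h : Function.Injective γ then p ⟨γ, h⟩ else 0 with hp'
  have hcomb : ∀ (i : Fin d) (α : {j : Fin d // j ≠ i} → S) (s : S),
      combine i α s = OffDiagAux.comb i α s := fun i α s => rfl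
  have hH : OffDiagAux.Hyp (Finset.univ : Finset S) p' l := by
    intro i rows cols hrows hcols hcond
    have hinj : ∀ a b, Function.Injective (combine i (rows a) (cols b)) := fun a b => by
      rw [hcomb]; exact (hcond a b).1
    have hdet := hminor i rows cols hrows hcols hinj
    have heq : (Matrix.of fun a b => p' (OffDiagAux.comb i (rows a) (cols b)))
        = Matrix.of fun a b => p ⟨combine i (rows a) (cols b), hinj a b⟩ := by
      ext a b
      simp only [Matrix.of_apply]
      rw [hp']
      dsimp only
      rw [← hcomb, dif_pos (hinj a b)]
    rw [heq]
    exact hdet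
  obtain ⟨pt, hrk, hagr⟩ :=
    OffDiagAux3.aux l d hd (Fin d) (Fintype.card_fin d) S Finset.univ p' hH
  refine ⟨pt, OffDiagAux.tensorRank_le_of_hasRkOn hd hrk, ?_⟩
  intro α h
  rw [hagr α h (fun j => Finset.mem_univ _), hp']
  dsimp only
  rw [dif_pos h]
end

section
/- Let K be a commutative ring, d a nonnegative integer, and T₀ a finite set. For every finite set T there is a K-algebra isomorphism, natural in T with respect to injections, between K[y_α : α an injective map [d] → T₀ ⊔ T] and the tensor product over e = 0,…,d of (K[y_β : β an injective map [e] → T])^{⊗ m_e}, where m_e = (d choose e) · |T₀| · (|T₀|−1) ⋯ (|T₀|−(d−e)+1) counts ways to place d−e of the d index positions into T₀ injectively. -/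
/-- The multiplicity `m_e = (d choose e) · |T₀|·(|T₀|−1)⋯(|T₀|−(d−e)+1)`:
the number of ways of filling `d − e` of the `d` index positions injectively
with elements of `T₀`. -/
def multFactor (d e t₀ : ℕ) : ℕ := Nat.choose d e * Nat.descFactorial t₀ (d - e)

namespace ShiftBd

variable {T₀ T T' : Type}

def rightSet (d : ℕ) (α : Fin d → T₀ ⊕ T) : Finset (Fin d) :=
  Finset.univ.filter (fun i => (α i).isRight)

lemma mem_rightSet {d : ℕ} {α : Fin d → T₀ ⊕ T} {i : Fin d} :
    i ∈ rightSet d α ↔ (α i).isRight := by simp [rightSet]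

lemma rightSet_card_le {d : ℕ} (α : Fin d → T₀ ⊕ T) : (rightSet d α).card ≤ d := by
  simpa using Finset.card_le_card (Finset.subset_univ (rightSet d α))

/-- The "copy" data for level `e`. -/
abbrev Copies (d : ℕ) (T₀ : Type) (e : ℕ) : Type :=
  Σ S : {S : Finset (Fin d) // S.card = e},
    {g : {i : Fin d // i ∈ S.1ᶜ} → T₀ // Function.Injective g}

lemma card_copies (d e : ℕ) [DecidableEq T₀] [Fintype T₀] :
    Fintype.card (Copies d T₀ e) = multFactor d e (Fintype.card T₀) := by
  classical
  rw [Fintype.card_sigma]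
  have h1 : ∀ S : {S : Finset (Fin d) // S.card = e},
      Fintype.card {g : {i : Fin d // i ∈ S.1ᶜ} → T₀ // Function.Injective g}
        = Nat.descFactorial (Fintype.card T₀) (d - e) := by
    intro S
    rw [Fintype.card_congr (Equiv.subtypeInjectiveEquivEmbedding _ _),
      Fintype.card_embedding_eq]
    congr 1
    rw [Fintype.card_coe, Finset.card_compl, S.2, Fintype.card_fin]
  simp only [h1, Finset.sum_const, smul_eq_mul]
  rw [Finset.card_univ, Fintype.card_finset_len, Fintype.card_fin, multFactor]

/-- fixed equivalence of copies with `Fin (multFactor ...)`. -/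
noncomputable def copyEquiv (d : ℕ) (T₀ : Type) [DecidableEq T₀] [Fintype T₀]
    (e : ℕ) :
    Copies d T₀ e ≃ Fin (multFactor d e (Fintype.card T₀)) :=
  Fintype.equivFinOfCardEq (card_copies d e)

lemma orderEmb_congr {d : ℕ} {S S' : Finset (Fin d)} {n n' : ℕ}
    (h : S.card = n) (h' : S'.card = n') (hSS : S = S')
    (j : ℕ) (hj : j < n) (hj' : j < n') :
    S.orderEmbOfFin h ⟨j, hj⟩ = S'.orderEmbOfFin h' ⟨j, hj'⟩ := by
  subst hSS; subst h; subst h'; rfl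

abbrev Target (d : ℕ) (T₀ T : Type) : Type :=
  Σ e : Fin (d + 1), Copies d T₀ (e : ℕ) × {β : Fin (e : ℕ) → T // Function.Injective β}

lemma target_eq {d : ℕ} (e e' : Fin (d + 1)) (S S' : Finset (Fin d))
    (hS : S.card = (e : ℕ)) (hS' : S'.card = (e' : ℕ))
    (g : {g : {i : Fin d // i ∈ Sᶜ} → T₀ // Function.Injective g})
    (g' : {g : {i : Fin d // i ∈ S'ᶜ} → T₀ // Function.Injective g})
    (β : {β : Fin (e : ℕ) → T // Function.Injective β})
    (β' : {β : Fin (e' : ℕ) → T // Function.Injective β})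
    (h1 : S = S')
    (h2 : ∀ i (hi : i ∈ Sᶜ) (hi' : i ∈ S'ᶜ), g.1 ⟨i, hi⟩ = g'.1 ⟨i, hi'⟩)
    (h3 : ∀ j (hj : j < (e : ℕ)) (hj' : j < (e' : ℕ)), β.1 ⟨j, hj⟩ = β'.1 ⟨j, hj'⟩) :
    (⟨e, ⟨⟨S, hS⟩, g⟩, β⟩ : Target d T₀ T) = ⟨e', ⟨⟨S', hS'⟩, g'⟩, β'⟩ := by
  subst h1
  have he : e = e' := Fin.ext (hS ▸ hS')
  subst he
  have hg : g = g' := Subtype.ext (funext fun i => h2 i.1 i.2 i.2)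
  have hβ : β = β' := Subtype.ext (funext fun j => h3 j.1 j.2 j.2)
  subst hg; subst hβ; rfl

lemma isLeft_of_compl {d : ℕ} {α : Fin d → T₀ ⊕ T} {i : Fin d}
    (hi : i ∈ (rightSet d α)ᶜ) : (α i).isLeft := by
  rw [Finset.mem_compl, mem_rightSet] at hi
  exact Sum.not_isRight.mp hi

variable (d : ℕ)

/-- Forward map. -/
def fwd (α : {α : Fin d → T₀ ⊕ T // Function.Injective α}) : Target d T₀ T := by
  refine ⟨⟨(rightSet d α.1).card, Nat.lt_succ_of_le (rightSet_card_le α.1)⟩,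
    ⟨⟨⟨rightSet d α.1, rfl⟩, ⟨fun i => (α.1 i.1).getLeft (isLeft_of_compl i.2), ?_⟩⟩,
      ⟨fun j => (α.1 ((rightSet d α.1).orderEmbOfFin rfl j)).getRight
        (mem_rightSet.mp (Finset.orderEmbOfFin_mem (rightSet d α.1) rfl j)), ?_⟩⟩⟩
  · intro i j h
    dsimp only at h
    apply Subtype.ext
    apply α.2
    rw [← Sum.inl_getLeft _ (isLeft_of_compl i.2), ← Sum.inl_getLeft _ (isLeft_of_compl j.2), h]
  · intro i j h
    dsimp only at h
    have h2 : α.1 ((rightSet d α.1).orderEmbOfFin rfl i)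
        = α.1 ((rightSet d α.1).orderEmbOfFin rfl j) := by
      rw [← Sum.inr_getRight _ (mem_rightSet.mp (Finset.orderEmbOfFin_mem _ rfl i)),
        ← Sum.inr_getRight _ (mem_rightSet.mp (Finset.orderEmbOfFin_mem _ rfl j)), h]
    exact ((rightSet d α.1).orderEmbOfFin rfl).injective (α.2 h2)

def bwdFun (S : Finset (Fin d)) {e : ℕ} (hS : S.card = e)
    (g : {i : Fin d // i ∈ Sᶜ} → T₀) (β : Fin e → T) (i : Fin d) : T₀ ⊕ T :=
  if h : i ∈ S then Sum.inr (β ((S.orderIsoOfFin hS).symm ⟨i, h⟩))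
  else Sum.inl (g ⟨i, Finset.mem_compl.mpr h⟩)

lemma bwdFun_inj (S : Finset (Fin d)) {e : ℕ} (hS : S.card = e)
    (g : {i : Fin d // i ∈ Sᶜ} → T₀) (hg : Function.Injective g)
    (β : Fin e → T) (hβ : Function.Injective β) :
    Function.Injective (bwdFun d S hS g β) := by
  intro i j hij
  unfold bwdFun at hij
  by_cases hi : i ∈ S <;> by_cases hj : j ∈ S <;> simp [hi, hj] at hij
  · exact congrArg Subtype.val ((S.orderIsoOfFin hS).symm.injective (hβ hij))
  · exact congrArg Subtype.val (hg hij)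

/-- Backward map. -/
def bwd (x : Target d T₀ T) : {α : Fin d → T₀ ⊕ T // Function.Injective α} :=
  ⟨bwdFun d x.2.1.1.1 x.2.1.1.2 x.2.1.2.1 x.2.2.1,
    bwdFun_inj d _ _ _ x.2.1.2.2 _ x.2.2.2⟩

lemma mem_rightSet_bwdFun (S : Finset (Fin d)) {e : ℕ} (hS : S.card = e)
    (g : {i : Fin d // i ∈ Sᶜ} → T₀) (β : Fin e → T) :
    rightSet d (bwdFun d S hS g β) = S := by
  ext i
  rw [mem_rightSet, bwdFun]
  by_cases h : i ∈ S <;> simp [h]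

lemma bwd_fwd (α : {α : Fin d → T₀ ⊕ T // Function.Injective α}) :
    bwd d (fwd d α) = α := by
  apply Subtype.ext
  funext i
  show bwdFun d (rightSet d α.1) rfl _ _ i = α.1 i
  unfold bwdFun
  by_cases hi : i ∈ rightSet d α.1
  · rw [dif_pos hi]
    show Sum.inr ((α.1 ((rightSet d α.1).orderEmbOfFin rfl
      (((rightSet d α.1).orderIsoOfFin rfl).symm ⟨i, hi⟩))).getRight _) = α.1 i
    have key : (rightSet d α.1).orderEmbOfFin rfl
        (((rightSet d α.1).orderIsoOfFin rfl).symm ⟨i, hi⟩) = i := by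
      rw [← Finset.coe_orderIsoOfFin_apply, OrderIso.apply_symm_apply]
    simp only [key]
    exact Sum.inr_getRight _ (mem_rightSet.mp hi)
  · rw [dif_neg hi]
    show Sum.inl ((α.1 i).getLeft _) = α.1 i
    exact Sum.inl_getLeft _ (isLeft_of_compl (Finset.mem_compl.mpr hi))

lemma fwd_bwd (x : Target d T₀ T) : fwd d (bwd d x) = x := by
  obtain ⟨e, ⟨⟨S, hS⟩, g, hg⟩, β, hβ⟩ := x
  have hR : rightSet d (bwdFun d S hS g β) = S := mem_rightSet_bwdFun d S hS g β
  refine target_eq _ _ _ _ _ _ _ _ _ _ hR ?_ ?_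
  · intro i hi hi'
    show ((bwdFun d S hS g β) i).getLeft _ = _
    have hiS : i ∉ S := Finset.mem_compl.mp hi'
    simp only [bwdFun, dif_neg hiS, Sum.getLeft_inl]
  · intro j hj hj'
    show ((bwdFun d S hS g β) ((rightSet d (bwdFun d S hS g β)).orderEmbOfFin rfl
      ⟨j, hj⟩)).getRight _ = β ⟨j, hj'⟩
    have key : (rightSet d (bwdFun d S hS g β)).orderEmbOfFin rfl ⟨j, hj⟩
        = S.orderEmbOfFin hS ⟨j, hj'⟩ := orderEmb_congr _ _ hR j hj hj'
    simp only [key]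
    have hmem : (S.orderEmbOfFin hS ⟨j, hj'⟩) ∈ S := Finset.orderEmbOfFin_mem _ _ _
    simp only [bwdFun, dif_pos hmem, Sum.getRight_inr]
    congr 1
    apply ((S.orderIsoOfFin hS)).symm_apply_eq.mpr
    apply Subtype.ext
    rw [Finset.coe_orderIsoOfFin_apply]

/-- The main equivalence. -/
def mainEquiv (T₀ T : Type) : {α : Fin d → T₀ ⊕ T // Function.Injective α} ≃ Target d T₀ T :=
  ⟨fwd d, bwd d, bwd_fwd d, fwd_bwd d⟩

def pushTarget (σ : T → T') (hσ : Function.Injective σ) (x : Target d T₀ T) : Target d T₀ T' :=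
  ⟨x.1, x.2.1, ⟨σ ∘ x.2.2.1, hσ.comp x.2.2.2⟩⟩

lemma rightSet_map (σ : T → T') (α : Fin d → T₀ ⊕ T) :
    rightSet d (Sum.map id σ ∘ α) = rightSet d α := by
  ext i
  simp only [mem_rightSet, Function.comp_apply]
  cases α i <;> simp

lemma getLeft_map' (x : T₀ ⊕ T) (σ : T → T') (h : (Sum.map id σ x).isLeft)
    (h' : x.isLeft) : (Sum.map id σ x).getLeft h = x.getLeft h' := by
  cases x
  · simp
  · exact absurd h' (by simp)

lemma getRight_map' (x : T₀ ⊕ T) (σ : T → T') (h : (Sum.map id σ x).isRight)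
    (h' : x.isRight) : (Sum.map id σ x).getRight h = σ (x.getRight h') := by
  cases x
  · exact absurd h' (by simp)
  · simp

lemma fwd_natural (σ : T → T') (hσ : Function.Injective σ)
    (α : {α : Fin d → T₀ ⊕ T // Function.Injective α}) :
    fwd d (⟨Sum.map id σ ∘ α.1, (Function.injective_id.sumMap hσ).comp α.2⟩ :
      {α : Fin d → T₀ ⊕ T' // Function.Injective α})
      = pushTarget d σ hσ (fwd d α) := by
  refine target_eq _ _ _ _ _ _ _ _ _ _ (rightSet_map d σ α.1) ?_ ?_
  · intro i hi hi'
    show (Sum.map id σ (α.1 i)).getLeft _ = (α.1 i).getLeft _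
    exact getLeft_map' _ _ _ (isLeft_of_compl hi')
  · intro j hj hj'
    have key : (rightSet d (Sum.map id σ ∘ α.1)).orderEmbOfFin rfl ⟨j, hj⟩
        = (rightSet d α.1).orderEmbOfFin rfl ⟨j, hj'⟩ :=
      orderEmb_congr _ _ (rightSet_map d σ α.1) j hj hj'
    show (Sum.map id σ (α.1 ((rightSet d (Sum.map id σ ∘ α.1)).orderEmbOfFin rfl
        ⟨j, hj⟩))).getRight _
      = σ ((α.1 ((rightSet d α.1).orderEmbOfFin rfl ⟨j, hj'⟩)).getRight _)
    simp only [key]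
    exact getRight_map' _ _ _
      (mem_rightSet.mp (Finset.orderEmbOfFin_mem (rightSet d α.1) rfl ⟨j, hj'⟩))

/-- The full natural equivalence of variable sets. -/
noncomputable def fullEquiv (T₀ T : Type) [DecidableEq T₀] [Fintype T₀] :
    {α : Fin d → T₀ ⊕ T // Function.Injective α} ≃
      (Σ e : Fin (d + 1), Fin (multFactor d e (Fintype.card T₀)) ×
        {β : Fin (e : ℕ) → T // Function.Injective β}) :=
  (mainEquiv d T₀ T).trans (Equiv.sigmaCongrRight fun e =>
    (copyEquiv d T₀ (e : ℕ)).prodCongr (Equiv.refl _))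

lemma fullEquiv_natural (T₀ : Type) [DecidableEq T₀] [Fintype T₀]
    (σ : T → T') (hσ : Function.Injective σ)
    (α : {α : Fin d → T₀ ⊕ T // Function.Injective α}) :
    fullEquiv d T₀ T' (⟨Sum.map id σ ∘ α.1, (Function.injective_id.sumMap hσ).comp α.2⟩ :
      {α : Fin d → T₀ ⊕ T' // Function.Injective α})
      = (fun v : Σ e : Fin (d + 1), Fin (multFactor d e (Fintype.card T₀)) ×
            {β : Fin (e : ℕ) → T // Function.Injective β} =>
          (⟨v.1, v.2.1, ⟨σ ∘ v.2.2.1, hσ.comp v.2.2.2⟩⟩ :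
            Σ e : Fin (d + 1), Fin (multFactor d e (Fintype.card T₀)) ×
              {β : Fin (e : ℕ) → T' // Function.Injective β}))
        (fullEquiv d T₀ T α) := by
  exact congrArg (fun y : Target d T₀ T' =>
    (Equiv.sigmaCongrRight fun e : Fin (d + 1) =>
      ((copyEquiv d T₀ (e : ℕ)).prodCongr
        (Equiv.refl {β : Fin (e : ℕ) → T' // Function.Injective β}))) y)
    (fwd_natural d σ hσ α)

end ShiftBd

/-- Shift isomorphism: for a fixed finite set `T₀`, there is a `K`-algebra
isomorphism, natural in the finite set `T` with respect to injections, between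
`K[y_α : α injective [d] → T₀ ⊔ T]` and the tensor product
`⨂_{e=0}^{d} (K[y_β : β injective [e] → T])^{⊗ m_e}` — the latter realized
canonically as the polynomial ring on the disjoint union of the variable sets,
indexed by triples `(e, copy ∈ [m_e], β injective [e] → T)`. -/
theorem shift_Bd_iso (K : Type) [CommRing K] (d : ℕ)
    (T₀ : Type) [Fintype T₀] [DecidableEq T₀] :
    ∃ iso : ∀ (T : Type) [Fintype T] [DecidableEq T],
      MvPolynomial {α : Fin d → T₀ ⊕ T // Function.Injective α} K ≃ₐ[K]
        MvPolynomial (Σ e : Fin (d + 1),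
          Fin (multFactor d e (Fintype.card T₀)) ×
            {β : Fin (e : ℕ) → T // Function.Injective β}) K,
      ∀ (T T' : Type) [Fintype T] [DecidableEq T] [Fintype T'] [DecidableEq T']
        (σ : T → T') (hσ : Function.Injective σ),
        (iso T').toAlgHom.comp
            (MvPolynomial.rename fun α : {α : Fin d → T₀ ⊕ T // Function.Injective α} =>
              (⟨Sum.map id σ ∘ α.1, (Function.injective_id.sumMap hσ).comp α.2⟩ :
                {α : Fin d → T₀ ⊕ T' // Function.Injective α})) =
          (MvPolynomial.rename fun v : Σ e : Fin (d + 1),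
              Fin (multFactor d e (Fintype.card T₀)) ×
                {β : Fin (e : ℕ) → T // Function.Injective β} =>
            (⟨v.1, v.2.1, ⟨σ ∘ v.2.2.1, hσ.comp v.2.2.2⟩⟩ :
              Σ e : Fin (d + 1),
                Fin (multFactor d e (Fintype.card T₀)) ×
                  {β : Fin (e : ℕ) → T' // Function.Injective β})).comp
            (iso T).toAlgHom := by
  classical
  refine ⟨fun T _ _ => MvPolynomial.renameEquiv K (ShiftBd.fullEquiv d T₀ T), ?_⟩
  intro T T' _ _ _ _ σ hσ
  apply MvPolynomial.algHom_ext
  intro a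
  simp only [AlgHom.comp_apply, MvPolynomial.rename_X, AlgEquiv.toAlgHom_eq_coe,
    AlgHom.coe_coe, MvPolynomial.renameEquiv_apply]
  show MvPolynomial.rename _ _ = MvPolynomial.rename _ (MvPolynomial.rename _ _)
  simp only [MvPolynomial.rename_X]
  exact congrArg (MvPolynomial.X (R := K)) (ShiftBd.fullEquiv_natural d T₀ σ hσ a)
end

section
/- Let K be a commutative ring and let A, C be FI-algebras over K. If A is generated by finitely many elements of width at most d and C is generated by finitely many elements of width at most d', then the FI-algebra S ↦ A(S) ⊗_K C(S) is generated by finitely many elements of width at most max(d, d'). -/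
/-- An FI-algebra over `K`: a functor from finite sets with injections to
commutative `K`-algebras. -/
structure FIAlgebra (K : Type) [CommRing K] : Type 1 where
  obj : ∀ (S : Type) [Fintype S], Type
  [commRing : ∀ (S : Type) [Fintype S], CommRing (obj S)]
  [algebra : ∀ (S : Type) [Fintype S], Algebra K (obj S)]
  map : ∀ {S T : Type} [Fintype S] [Fintype T] {σ : S → T},
      Function.Injective σ → (obj S →ₐ[K] obj T)
  map_id : ∀ (S : Type) [Fintype S],
      map (Function.injective_id (α := S)) = AlgHom.id K (obj S)
  map_comp : ∀ {S T U : Type} [Fintype S] [Fintype T] [Fintype U]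
      {σ : S → T} {τ : T → U} (hσ : Function.Injective σ) (hτ : Function.Injective τ),
      map (hτ.comp hσ) = (map hτ).comp (map hσ)

attribute [instance] FIAlgebra.commRing FIAlgebra.algebra

variable {K : Type} [CommRing K]

/-- A sub-FI-algebra of an FI-algebra `A`. -/
structure FISubalgebra (A : FIAlgebra K) : Type 1 where
  carrier : ∀ (S : Type) [Fintype S], Subalgebra K (A.obj S)
  map_mem : ∀ {S T : Type} [Fintype S] [Fintype T] {σ : S → T}
      (hσ : Function.Injective σ) {x : A.obj S},
      x ∈ carrier S → A.map hσ x ∈ carrier T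

/-- An element of an FI-algebra: an element of `A(S)` for some finite set `S`. -/
structure FIElem (A : FIAlgebra K) : Type 1 where
  S : Type
  [fin : Fintype S]
  x : A.obj S

attribute [instance] FIElem.fin

/-- A set `D` of elements generates the FI-algebra `A` if no proper sub-FI-algebra
contains `D`. -/
def Generates (A : FIAlgebra K) (D : Set (FIElem A)) : Prop :=
  ∀ P : FISubalgebra A, (∀ e ∈ D, e.x ∈ P.carrier e.S) →
    ∀ (S : Type) [Fintype S], ∀ x : A.obj S, x ∈ P.carrier S

/-- An element of an FI-algebra has width at most `d` if it is the image of an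
element of `A([n])` for some `n ≤ d` under a map induced by an injection. -/
def WidthLE (A : FIAlgebra K) (e : FIElem A) (d : ℕ) : Prop :=
  ∃ (n : ℕ), n ≤ d ∧ ∃ (π : Fin n → e.S) (hπ : Function.Injective π),
    e.x ∈ (A.map hπ).range

/-- The tensor product of two FI-algebras, `S ↦ A(S) ⊗_K C(S)`. -/
noncomputable def FIAlgebra.tensor (A C : FIAlgebra K) : FIAlgebra K where
  obj S _ := TensorProduct K (A.obj S) (C.obj S)
  commRing := fun _ _ => inferInstance
  algebra := fun _ _ => inferInstance
  map {S T} _ _ {σ} hσ := Algebra.TensorProduct.map (A.map hσ) (C.map hσ)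
  map_id S _ := by beta_reduce; rw [A.map_id, C.map_id, Algebra.TensorProduct.map_id]
  map_comp {S T U} _ _ _ {σ} {τ} hσ hτ := by
    beta_reduce
    rw [A.map_comp hσ hτ, C.map_comp hσ hτ, Algebra.TensorProduct.map_comp]

lemma tensor_map_tmul (A C : FIAlgebra K) {S T : Type} [Fintype S] [Fintype T]
    {σ : S → T} (hσ : Function.Injective σ) (a : A.obj S) (c : C.obj S) :
    (A.tensor C).map hσ (a ⊗ₜ[K] c) = (A.map hσ a) ⊗ₜ[K] (C.map hσ c) := rfl

/-- If `A` is generated by finitely many elements of width at most `d` and `C` is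
generated by finitely many elements of width at most `d'`, then `S ↦ A(S) ⊗ C(S)`
is generated by finitely many elements of width at most `max d d'`. -/
theorem tensor_finitely_generated_width (A C : FIAlgebra K) (d d' : ℕ)
    (hA : ∃ D : Set (FIElem A), D.Finite ∧ Generates A D ∧ ∀ e ∈ D, WidthLE A e d)
    (hC : ∃ D : Set (FIElem C), D.Finite ∧ Generates C D ∧ ∀ e ∈ D, WidthLE C e d') :
    ∃ D : Set (FIElem (A.tensor C)), D.Finite ∧ Generates (A.tensor C) D ∧
      ∀ e ∈ D, WidthLE (A.tensor C) e (max d d') := by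
  obtain ⟨DA, hDAfin, hDAgen, hDAw⟩ := hA
  obtain ⟨DC, hDCfin, hDCgen, hDCw⟩ := hC
  refine ⟨(fun e : FIElem A => (⟨e.S, e.x ⊗ₜ[K] 1⟩ : FIElem (A.tensor C))) '' DA ∪
      (fun e : FIElem C => (⟨e.S, (1 : A.obj e.S) ⊗ₜ[K] e.x⟩ : FIElem (A.tensor C))) '' DC,
      (hDAfin.image _).union (hDCfin.image _), ?_, ?_⟩
  · intro P hP S _ x
    -- pullback subalgebras
    have hPA : ∀ (S : Type) [Fintype S], ∀ a : A.obj S, a ⊗ₜ[K] (1 : C.obj S) ∈ P.carrier S := by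
      refine hDAgen
        { carrier := fun S _ =>
            (P.carrier S).comap (Algebra.TensorProduct.includeLeft (R := K) (S := K)
              (A := A.obj S) (B := C.obj S))
          map_mem := ?_ } ?_
      · intro S T _ _ σ hσ x hx
        change x ⊗ₜ[K] (1 : C.obj S) ∈ P.carrier S at hx
        change (A.map hσ x) ⊗ₜ[K] (1 : C.obj T) ∈ P.carrier T
        have : (A.tensor C).map hσ (x ⊗ₜ[K] 1) = (A.map hσ x) ⊗ₜ[K] (1 : C.obj T) := by
          rw [tensor_map_tmul]; simp; rfl
        rw [← this]
        exact P.map_mem hσ hx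
      · intro e he
        exact hP ⟨e.S, e.x ⊗ₜ[K] 1⟩ (Or.inl ⟨e, he, rfl⟩)
    have hPC : ∀ (S : Type) [Fintype S], ∀ c : C.obj S, (1 : A.obj S) ⊗ₜ[K] c ∈ P.carrier S := by
      refine hDCgen
        { carrier := fun S _ =>
            (P.carrier S).comap (Algebra.TensorProduct.includeRight (R := K)
              (A := A.obj S) (B := C.obj S))
          map_mem := ?_ } ?_
      · intro S T _ _ σ hσ x hx
        change (1 : A.obj S) ⊗ₜ[K] x ∈ P.carrier S at hx
        change (1 : A.obj T) ⊗ₜ[K] (C.map hσ x) ∈ P.carrier T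
        have : (A.tensor C).map hσ ((1 : A.obj S) ⊗ₜ[K] x) = (1 : A.obj T) ⊗ₜ[K] (C.map hσ x) := by
          rw [tensor_map_tmul]; simp; rfl
        rw [← this]
        exact P.map_mem hσ hx
      · intro e he
        exact hP ⟨e.S, (1 : A.obj e.S) ⊗ₜ[K] e.x⟩ (Or.inr ⟨e, he, rfl⟩)
    induction x using TensorProduct.induction_on with
    | zero => exact (P.carrier S).zero_mem
    | tmul a c =>
      have : a ⊗ₜ[K] c = (a ⊗ₜ[K] (1 : C.obj S)) * ((1 : A.obj S) ⊗ₜ[K] c) := by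
        simp [Algebra.TensorProduct.tmul_mul_tmul]
      rw [this]
      exact (P.carrier S).mul_mem (hPA S a) (hPC S c)
    | add x y hx hy => exact (P.carrier S).add_mem hx hy
  · rintro e (⟨f, hf, rfl⟩ | ⟨f, hf, rfl⟩)
    · obtain ⟨n, hn, π, hπ, y, hy⟩ := hDAw f hf
      refine ⟨n, le_trans hn (le_max_left d d'), π, hπ, y ⊗ₜ[K] 1, ?_⟩
      show (A.tensor C).map hπ (y ⊗ₜ[K] 1) = f.x ⊗ₜ[K] 1
      rw [tensor_map_tmul, map_one]
      exact congrArg (· ⊗ₜ[K] (1 : C.obj f.S)) hy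
    · obtain ⟨n, hn, π, hπ, y, hy⟩ := hDCw f hf
      refine ⟨n, le_trans hn (le_max_right d d'), π, hπ, (1 : A.obj (Fin n)) ⊗ₜ[K] y, ?_⟩
      show (A.tensor C).map hπ ((1 : A.obj (Fin n)) ⊗ₜ[K] y) = (1 : A.obj f.S) ⊗ₜ[K] f.x
      rw [tensor_map_tmul, map_one]
      exact congrArg ((1 : A.obj f.S) ⊗ₜ[K] ·) hy
end

section
/- Let K be a Noetherian commutative ring and k a nonnegative integer. The polynomial ring R = K[x_{i,j} : i ∈ [k], j ∈ ℕ], with the action of the group Sym(∞) of finitely-supported permutations of ℕ given by σ·x_{i,j} = x_{i,σ(j)}, satisfies the ascending chain condition on Sym(∞)-stable ideals. -/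
namespace CAHS

open Finsupp


open Finsupp

/-- index type with the order making lex monomial order work -/
abbrev Vl (k : ℕ) := Fin k ×ₗ ℕᵒᵈ

instance wfGT (k : ℕ) : WellFoundedGT (Vl k) := by
  constructor
  have h1 : WellFounded ((· > ·) : Fin k → Fin k → Prop) := wellFounded_gt
  have h2 : WellFounded ((· > ·) : ℕᵒᵈ → ℕᵒᵈ → Prop) := wellFounded_gt
  apply Subrelation.wf (r := fun a b => Prod.Lex (· > ·) (· > ·) (ofLex a) (ofLex b))
    ?_ ((WellFounded.prod_lex h1 h2).onFun (f := ofLex))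
  rintro ⟨a1, a2⟩ ⟨b1, b2⟩ h
  rcases (Prod.Lex.toLex_lt_toLex (x := (b1, b2)) (y := (a1, a2))).mp h with h | ⟨heq, h2⟩
  · exact Prod.Lex.left _ _ h
  · subst heq; exact Prod.Lex.right _ h2

/-- the target well-ordered monoid of the monomial order -/
abbrev T (k : ℕ) := Lex ((Vl k) →₀ ℕ)

theorem lex_mapDomain_lt_iff {α : Type*} [LinearOrder α] {G : α → α} (hG : StrictMono G)
    (a b : α →₀ ℕ) :
    toLex (a.mapDomain G) < toLex (b.mapDomain G) ↔ toLex a < toLex b := by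
  classical
  have key : ∀ a b : α →₀ ℕ, toLex a < toLex b →
      toLex (a.mapDomain G) < toLex (b.mapDomain G) := by
    intro a b h
    rw [Finsupp.Lex.lt_iff] at h ⊢
    obtain ⟨i, hlt, hi⟩ := h
    refine ⟨G i, fun y hy => ?_, ?_⟩
    · by_cases hy' : y ∈ Set.range G
      · obtain ⟨x, rfl⟩ := hy'
        simp only [ofLex_toLex] at *
        rw [Finsupp.mapDomain_apply hG.injective, Finsupp.mapDomain_apply hG.injective]
        exact hlt x (hG.lt_iff_lt.mp hy)
      · simp only [ofLex_toLex] at *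
        rw [Finsupp.mapDomain_notin_range _ _ hy', Finsupp.mapDomain_notin_range _ _ hy']
    · simp only [ofLex_toLex] at *
      rw [Finsupp.mapDomain_apply hG.injective, Finsupp.mapDomain_apply hG.injective]
      exact hi
  constructor
  · intro h
    rcases lt_trichotomy (toLex a) (toLex b) with h' | h' | h'
    · exact h'
    · exfalso
      have : a = b := toLex.injective h'
      subst this; exact lt_irrefl _ h
    · exact absurd (key _ _ h') (asymm h)
  · exact key a b

theorem lex_mapDomain_le_iff {α : Type*} [LinearOrder α] {G : α → α} (hG : StrictMono G)
    (a b : α →₀ ℕ) :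
    toLex (a.mapDomain G) ≤ toLex (b.mapDomain G) ↔ toLex a ≤ toLex b := by
  rw [← not_lt, ← not_lt, lex_mapDomain_lt_iff hG]

open Finsupp

variable {k : ℕ}

/-- identification of the variable index with the ordered version -/
def eV (k : ℕ) : (Fin k × ℕ) ≃ (Vl k) :=
  (Equiv.prodCongr (Equiv.refl _) OrderDual.toDual).trans toLex

/-- the monomial order map -/
noncomputable def tos (a : (Fin k × ℕ) →₀ ℕ) : T k := toLex (a.mapDomain (eV k))

theorem tos_injective : Function.Injective (tos (k := k)) :=
  fun _ _ h => Finsupp.mapDomain_injective (eV k).injective (toLex.injective h)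

theorem tos_add (a b : (Fin k × ℕ) →₀ ℕ) : tos (a + b) = tos a + tos b := by
  unfold tos
  rw [Finsupp.mapDomain_add]
  rfl

/-- conjugated column map on the ordered index type -/
def Gmap (k : ℕ) (π : ℕ → ℕ) : Vl k → Vl k := fun p => (eV k) (Prod.map id π ((eV k).symm p))

theorem strictMono_Gmap (π : ℕ → ℕ) (hπ : StrictMono π) : StrictMono (Gmap k π) := by
  intro p q hpq
  rcases p with ⟨p1, p2⟩
  rcases q with ⟨q1, q2⟩
  have hpq' : Prod.Lex (· < ·) (· < ·) (p1, p2) (q1, q2) := hpq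
  show Prod.Lex (· < ·) ((· < ·) : ℕᵒᵈ → ℕᵒᵈ → Prop)
    (p1, OrderDual.toDual (π (OrderDual.ofDual p2)))
    (q1, OrderDual.toDual (π (OrderDual.ofDual q2)))
  cases hpq' with
  | left _ _ h => exact Prod.Lex.left _ _ h
  | right _ h => exact Prod.Lex.right _ (hπ h)

theorem tos_mapDomain (π : ℕ → ℕ) (a : (Fin k × ℕ) →₀ ℕ) :
    tos (a.mapDomain (Prod.map id π)) = toLex ((a.mapDomain (eV k)).mapDomain (Gmap k π)) := by
  unfold tos
  rw [← Finsupp.mapDomain_comp, ← Finsupp.mapDomain_comp]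
  congr 1

theorem tos_mapDomain_le_iff (π : ℕ → ℕ) (hπ : StrictMono π) (a b : (Fin k × ℕ) →₀ ℕ) :
    tos (a.mapDomain (Prod.map id π)) ≤ tos (b.mapDomain (Prod.map id π)) ↔ tos a ≤ tos b := by
  rw [tos_mapDomain, tos_mapDomain]
  exact lex_mapDomain_le_iff (strictMono_Gmap π hπ) _ _

/-- any injection extends, on an initial segment, to a finitely supported permutation -/
theorem exists_finperm_agree (π : ℕ → ℕ) (hπ : Function.Injective π) (w : ℕ) :
    ∃ σ : Equiv.Perm ℕ, {j : ℕ | σ j ≠ j}.Finite ∧ ∀ j < w, σ j = π j := by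
  induction w with
  | zero => exact ⟨1, by simp, fun j hj => absurd hj (Nat.not_lt_zero j)⟩
  | succ w ih =>
    obtain ⟨σ, hfin, hag⟩ := ih
    refine ⟨σ.trans (Equiv.swap (σ w) (π w)), ?_, ?_⟩
    · apply Set.Finite.subset
        (hfin.union ((Set.finite_singleton (σ.symm (π w))).insert w))
      intro j hj
      simp only [Set.mem_setOf_eq, Equiv.trans_apply] at hj
      simp only [Set.mem_union, Set.mem_insert_iff, Set.mem_singleton_iff, Set.mem_setOf_eq]
      by_cases h1 : σ j = j
      · rw [h1] at hj
        rcases eq_or_ne j (σ w) with h2 | h2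
        · exact Or.inr (Or.inl (σ.injective (h1.trans h2).symm).symm)
        · rcases eq_or_ne j (π w) with h3 | h3
          · exact Or.inr (Or.inr ((Equiv.eq_symm_apply σ).mpr (h1.trans h3)))
          · exact absurd (Equiv.swap_apply_of_ne_of_ne h2 h3) hj
      · exact Or.inl h1
    · intro j hj
      rcases Nat.lt_succ_iff_lt_or_eq.mp hj with hj | rfl
      · simp only [Equiv.trans_apply, hag j hj]
        apply Equiv.swap_apply_of_ne_of_ne
        · intro h
          exact absurd (σ.injective ((hag j hj).symm ▸ h)) (Nat.ne_of_lt hj)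
        · exact fun h => absurd (hπ h) (Nat.ne_of_lt hj)
      · simp [Equiv.trans_apply]

open Finsupp


variable {K : Type*} [CommRing K]

/-- leading `tos`-degree, with ⊥ for 0 -/
noncomputable def degB (f : MvPolynomial (Fin k × ℕ) K) : WithBot (T k) :=
  f.support.sup (fun d => ((tos d : T k) : WithBot (T k)))

theorem le_degB {f : MvPolynomial (Fin k × ℕ) K} {d : (Fin k × ℕ) →₀ ℕ}
    (hd : d ∈ f.support) : (tos d : WithBot (T k)) ≤ degB f := by
  unfold degB
  exact Finset.le_sup (f := fun d => ((tos d : T k) : WithBot (T k))) hd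

theorem exists_degB_top {f : MvPolynomial (Fin k × ℕ) K} (hf : f ≠ 0) :
    ∃ u, MvPolynomial.coeff u f ≠ 0 ∧ degB f = ((tos u : T k) : WithBot (T k)) ∧
      ∀ d ∈ f.support, tos d ≤ tos u := by
  obtain ⟨u, hu, hsup⟩ := Finset.exists_mem_eq_sup f.support
    (MvPolynomial.support_nonempty.mpr hf) (fun d => ((tos d : T k) : WithBot (T k)))
  refine ⟨u, MvPolynomial.mem_support_iff.mp hu, hsup, fun d hd => ?_⟩
  have := Finset.le_sup (f := fun d => ((tos d : T k) : WithBot (T k))) hd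
  rw [hsup] at this
  simp only [WithBot.coe_le_coe] at this
  exact this

theorem degB_lt {g : MvPolynomial (Fin k × ℕ) K} {u : (Fin k × ℕ) →₀ ℕ}
    (h0 : MvPolynomial.coeff u g = 0)
    (hle : ∀ d ∈ g.support, tos d ≤ tos u) :
    degB g < ((tos u : T k) : WithBot (T k)) := by
  rcases eq_or_ne g 0 with rfl | hg
  · simp only [degB, MvPolynomial.support_zero, Finset.sup_empty]
    exact WithBot.bot_lt_coe _
  · obtain ⟨v, hv, hdeg, -⟩ := exists_degB_top hg
    rw [hdeg]
    have hvu : v ≠ u := fun h => hv (h ▸ h0)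
    have := hle v (MvPolynomial.mem_support_iff.mpr hv)
    exact_mod_cast lt_of_le_of_ne this (fun h => hvu (tos_injective h))

/-- strict bound for column indices appearing in `f` -/
noncomputable def colB (f : MvPolynomial (Fin k × ℕ) K) : ℕ :=
  (f.support.sup (fun d => d.support.sup (fun v => v.2))) + 1

theorem lt_colB {f : MvPolynomial (Fin k × ℕ) K} {d : (Fin k × ℕ) →₀ ℕ}
    {v : Fin k × ℕ} (hd : d ∈ f.support) (hv : v ∈ d.support) : v.2 < colB f :=
  Nat.lt_succ_of_le (le_trans (Finset.le_sup (f := fun v : Fin k × ℕ => v.2) hv)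
    (Finset.le_sup (f := fun d => d.support.sup (fun v : Fin k × ℕ => v.2)) hd))

/-- extraction of a strictly monotone column embedding from Higman's relation -/
theorem embed_of_sublistForall₂ {w1 w2 : ℕ} {F1 F2 : ℕ → Fin k → ℕ}
    (h : List.SublistForall₂ (· ≤ ·) ((List.range w1).map F1) ((List.range w2).map F2)) :
    ∃ π : ℕ → ℕ, StrictMono π ∧ ∀ j < w1, π j < w2 ∧ F1 j ≤ F2 (π j) := by
  obtain ⟨l, hall, hsub⟩ := List.sublistForall₂_iff.mp h
  obtain ⟨emb, hemb⟩ := List.sublist_iff_exists_fin_orderEmbedding_get_eq.mp hsub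
  obtain ⟨hlen, hpt⟩ := List.forall₂_iff_get.mp hall
  simp only [List.length_map, List.length_range] at hlen hemb hpt
  -- hlen : w1 = l.length
  have hl2 : ∀ ix : Fin l.length, (emb ix : ℕ) < w2 := by
    intro ix
    have := (emb ix).isLt
    simpa using this
  refine ⟨fun j => if hj : j < w1 then (emb ⟨j, hlen ▸ hj⟩ : ℕ) else j - w1 + w2, ?_, ?_⟩
  · intro j1 j2 hj
    by_cases h1 : j1 < w1
    · by_cases h2 : j2 < w1
      · simp only [dif_pos h1, dif_pos h2]
        have : (⟨j1, hlen ▸ h1⟩ : Fin l.length) < ⟨j2, hlen ▸ h2⟩ := hj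
        exact_mod_cast emb.strictMono this
      · simp only [dif_pos h1, dif_neg h2]
        exact lt_of_lt_of_le (hl2 _) (Nat.le_add_left _ _)
    · have h2 : ¬ j2 < w1 := fun h => h1 (lt_trans hj h)
      simp only [dif_neg h1, dif_neg h2]
      have hw1 : w1 ≤ j1 := Nat.le_of_not_lt h1
      exact Nat.add_lt_add_right (Nat.sub_lt_sub_right hw1 hj) _
  · intro j hj
    simp only [dif_pos hj]
    constructor
    · exact hl2 _
    · have h1 := hpt j (by simpa using (hlen ▸ hj)) (hlen ▸ hj)
      have h2 := hemb ⟨j, hlen ▸ hj⟩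
      -- h1 : ((range w1).map F1).get _ ≤ l.get _
      rw [h2] at h1
      simpa using h1


theorem prodmap_inj {β : Type*} {σ : ℕ → ℕ} (hσ : Function.Injective σ) :
    Function.Injective (Prod.map (id : β → β) σ) := by
  rintro ⟨a1, a2⟩ ⟨b1, b2⟩ hxy
  simp only [Prod.map, Prod.mk.injEq, id_eq] at hxy
  exact Prod.ext hxy.1 (hσ hxy.2)

end CAHS

open CAHS Finsupp MvPolynomial in
/-- The Cohen–Aschenbrenner–Hillar–Sullivant theorem: over a Noetherian
commutative ring `K`, the polynomial ring `K[x_{i,j} : i ∈ [k], j ∈ ℕ]` satisfies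
the ascending chain condition on ideals stable under the group `Sym(∞)` of
finitely-supported permutations of `ℕ`, acting by `σ · x_{i,j} = x_{i,σ(j)}`. -/
theorem sym_noetherianity (K : Type*) [CommRing K] [IsNoetherianRing K] (k : ℕ)
    (I : ℕ → Ideal (MvPolynomial (Fin k × ℕ) K))
    (hmono : Monotone I)
    (hstab : ∀ (n : ℕ) (σ : Equiv.Perm ℕ), {j : ℕ | σ j ≠ j}.Finite →
      ∀ f ∈ I n, MvPolynomial.rename (Prod.map id σ) f ∈ I n) :
    ∃ N, ∀ m, N ≤ m → I m = I N := by
  classical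
  by_contra hcon
  push_neg at hcon
  -- hcon : ∀ N, ∃ m, N ≤ m ∧ I m ≠ I N
  choose nxt hnxt1 hnxt2 using hcon
  set Nid : ℕ → ℕ := fun t => nxt^[t] 0 with hNid
  set J : ℕ → Ideal (MvPolynomial (Fin k × ℕ) K) := fun t => I (Nid t) with hJ
  have hNsucc : ∀ t, Nid (t + 1) = nxt (Nid t) := fun t => Function.iterate_succ_apply' nxt t 0
  have hJlt : ∀ t, J t < J (t + 1) := by
    intro t
    simp only [hJ, hNsucc t]
    exact lt_of_le_of_ne (hmono (hnxt1 _)) (Ne.symm (hnxt2 _))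
  have hJmono : Monotone J := monotone_nat_of_le_succ (fun t => (hJlt t).le)
  have hJstab : ∀ (t : ℕ) (σ : Equiv.Perm ℕ), {j : ℕ | σ j ≠ j}.Finite →
      ∀ f ∈ J t, MvPolynomial.rename (Prod.map id σ) f ∈ J t := fun t => hstab (Nid t)
  -- choose minimal-degree elements of `J (t+1) \ J t`
  have hminex : ∀ t, ∃ f : MvPolynomial (Fin k × ℕ) K, (f ∈ J (t + 1) ∧ f ∉ J t) ∧
      ∀ g, (g ∈ J (t + 1) ∧ g ∉ J t) → ¬ degB g < degB f := by
    intro t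
    obtain ⟨f0, hf01, hf02⟩ := SetLike.exists_of_lt (hJlt t)
    have wf : WellFounded ((· < ·) : WithBot (T k) → WithBot (T k) → Prop) := wellFounded_lt
    obtain ⟨x, hx, hxmin⟩ := WellFounded.has_min wf
      (degB '' {f | f ∈ J (t + 1) ∧ f ∉ J t}) ⟨degB f0, ⟨f0, ⟨hf01, hf02⟩, rfl⟩⟩
    obtain ⟨f, hfP, rfl⟩ := hx
    exact ⟨f, hfP, fun g hg hlt => hxmin (degB g) ⟨g, hg, rfl⟩ hlt⟩
  choose f hfP hfmin using hminex
  have hf0 : ∀ t, f t ≠ 0 := fun t h => (hfP t).2 (h ▸ (J t).zero_mem)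
  choose u hu hudeg hule using fun t => exists_degB_top (hf0 t)
  set w : ℕ → ℕ := fun t => colB (f t) with hw
  set lst : ℕ → List (Fin k → ℕ) :=
    fun t => (List.range (w t)).map (fun j i => (u t) (i, j)) with hlst
  -- Higman's lemma and extraction of a monotone subsequence
  have hPWO := Set.PartiallyWellOrderedOn.partiallyWellOrderedOn_sublistForall₂
    ((· ≤ ·) : (Fin k → ℕ) → (Fin k → ℕ) → Prop) (by simpa only [Set.pi_univ] using Set.IsPWO.pi (fun _ : Fin k => Set.isPWO_of_wellQuasiOrderedLE (Set.univ : Set ℕ)) : (Set.univ : Set (Fin k → ℕ)).IsPWO)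
  haveI : IsPreorder (List (Fin k → ℕ)) (List.SublistForall₂ ((· ≤ ·) : (Fin k → ℕ) → (Fin k → ℕ) → Prop)) :=
    { refl := fun a => refl a, trans := fun _ _ _ => _root_.trans }
  obtain ⟨φ, hφ⟩ := hPWO.exists_monotone_subseq (f := lst) (fun n x _ => Set.mem_univ x)
  -- Noetherianity of K : stabilization of leading coefficient ideals
  set c : ℕ → K := fun t => MvPolynomial.coeff (u (φ t)) (f (φ t)) with hc
  have hCmono : Monotone (fun M => Ideal.span (Set.range (fun i : Fin M => c i))) := by
    intro M M' hM
    apply Ideal.span_mono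
    rintro x ⟨i, rfl⟩
    exact ⟨Fin.castLE hM i, rfl⟩
  obtain ⟨n₀, hn₀⟩ := monotone_stabilizes_iff_noetherian.mpr
    (isNoetherianRing_iff.mp inferInstance)
    ⟨fun M => Ideal.span (Set.range (fun i : Fin M => c i)), hCmono⟩
  have hcmem : c n₀ ∈ Ideal.span (Set.range (fun i : Fin n₀ => c i)) := by
    have h1 : c n₀ ∈ Ideal.span (Set.range (fun i : Fin (n₀ + 1) => c i)) :=
      Ideal.subset_span ⟨⟨n₀, Nat.lt_succ_self n₀⟩, rfl⟩
    have h2 := hn₀ (n₀ + 1) (Nat.le_succ n₀)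
    simp only [OrderHom.coe_mk] at h2
    rw [← h2] at h1
    exact h1
  have hcmem' : c n₀ ∈ Submodule.span K (Set.range fun i : Fin n₀ => c i) := hcmem
  rw [Submodule.mem_span_range_iff_exists_fun] at hcmem'
  obtain ⟨a, ha⟩ := hcmem'
  -- column embeddings from Higman's relation
  have hembed : ∀ i : Fin n₀, ∃ π : ℕ → ℕ, StrictMono π ∧
      ∀ j < w (φ (i : ℕ)), π j < w (φ n₀) ∧
        (fun i0 => (u (φ (i : ℕ))) (i0, j)) ≤ (fun i0 => (u (φ n₀)) (i0, π j)) := by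
    intro i
    exact embed_of_sublistForall₂ (hφ (i : ℕ) n₀ i.isLt.le)
  choose π hπS hπP using hembed
  -- the renamed leading monomial divides the top one
  have hcolu : ∀ t x, x ∈ (u t).support → x.2 < w t := by
    intro t x hx
    exact lt_colB (MvPolynomial.mem_support_iff.mpr (hu t)) hx
  have hdiv : ∀ i : Fin n₀,
      Finsupp.mapDomain (Prod.map id (π i)) (u (φ (i : ℕ))) ≤ u (φ n₀) := by
    intro i
    rw [Finsupp.le_def]
    intro x
    by_cases hx : x ∈ Set.range (Prod.map id (π i))
    · obtain ⟨⟨i0, j⟩, rfl⟩ := hx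
      rw [Finsupp.mapDomain_apply (prodmap_inj (hπS i).injective)]
      by_cases hj : j < w (φ (i : ℕ))
      · exact (hπP i j hj).2 i0
      · have : (u (φ (i : ℕ))) (i0, j) = 0 := by
          by_contra hne
          exact hj (hcolu (φ (i : ℕ)) (i0, j) (Finsupp.mem_support_iff.mpr hne))
        simp [this]
    · rw [Finsupp.mapDomain_notin_range _ _ hx]
      exact Nat.zero_le _
  -- finitely supported permutations agreeing with the embeddings
  choose σp hσfin hσag using fun i : Fin n₀ =>
    exists_finperm_agree (π i) (hπS i).injective (w (φ (i : ℕ)))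
  have hmapeq : ∀ (i : Fin n₀) (d : (Fin k × ℕ) →₀ ℕ), d ∈ (f (φ (i : ℕ))).support →
      Finsupp.mapDomain (Prod.map id (σp i)) d = Finsupp.mapDomain (Prod.map id (π i)) d := by
    intro i d hd
    apply Finsupp.mapDomain_congr
    rintro ⟨x1, x2⟩ hx
    have hcol : x2 < w (φ (i : ℕ)) := lt_colB hd hx
    simp [Prod.map, hσag i x2 hcol]
  -- the cancelling combination
  set v : Fin n₀ → ((Fin k × ℕ) →₀ ℕ) :=
    fun i => u (φ n₀) - Finsupp.mapDomain (Prod.map id (π i)) (u (φ (i : ℕ))) with hv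
  have hvsum : ∀ i : Fin n₀,
      v i + Finsupp.mapDomain (Prod.map id (π i)) (u (φ (i : ℕ))) = u (φ n₀) := by
    intro i
    rw [hv]
    rw [tsub_add_cancel_of_le (hdiv i)]
  set h : Fin n₀ → MvPolynomial (Fin k × ℕ) K := fun i =>
    MvPolynomial.monomial (v i) (a i) *
      MvPolynomial.rename (Prod.map id (σp i)) (f (φ (i : ℕ))) with hh
  set g : MvPolynomial (Fin k × ℕ) K := f (φ n₀) - ∑ i, h i with hg
  have hσinj : ∀ i : Fin n₀, Function.Injective (Prod.map id (σp i) : Fin k × ℕ → Fin k × ℕ) :=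
    fun i => prodmap_inj (σp i).injective
  -- membership facts
  have hhmem : ∀ i : Fin n₀, h i ∈ J (φ n₀) := by
    intro i
    apply Ideal.mul_mem_left
    apply hJstab (φ n₀) (σp i) (hσfin i)
    have hlt : φ (i : ℕ) < φ n₀ := φ.strictMono i.isLt
    exact hJmono hlt (hfP (φ (i : ℕ))).1
  have hsummem : (∑ i, h i) ∈ J (φ n₀) := Ideal.sum_mem _ (fun i _ => hhmem i)
  have hgJ1 : g ∈ J (φ n₀ + 1) :=
    Submodule.sub_mem _ (hfP (φ n₀)).1 ((hJlt (φ n₀)).le hsummem)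
  have hgJ0 : g ∉ J (φ n₀) := by
    intro hmem
    apply (hfP (φ n₀)).2
    have : f (φ n₀) = g + ∑ i, h i := by rw [hg]; ring
    rw [this]
    exact Submodule.add_mem _ hmem hsummem
  -- the top coefficient of g vanishes
  have htop : ∀ i : Fin n₀, MvPolynomial.coeff (u (φ n₀)) (h i) = a i * c i := by
    intro i
    have husup : u (φ (i : ℕ)) ∈ (f (φ (i : ℕ))).support :=
      MvPolynomial.mem_support_iff.mpr (hu (φ (i : ℕ)))
    have e1 : u (φ n₀) = v i + Finsupp.mapDomain (Prod.map id (σp i)) (u (φ (i : ℕ))) := by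
      rw [hmapeq i _ husup, hvsum i]
    rw [hh, e1, MvPolynomial.coeff_monomial_mul,
      MvPolynomial.coeff_rename_mapDomain _ (hσinj i)]
  have hcoeff : MvPolynomial.coeff (u (φ n₀)) g = 0 := by
    rw [hg, MvPolynomial.coeff_sub, MvPolynomial.coeff_sum]
    simp only [htop]
    have : ∑ i : Fin n₀, a i * c i = c n₀ := by
      rw [← ha]
      simp [smul_eq_mul]
    rw [this]
    simp [hc]
  -- support bound for g
  have hsupp : ∀ d ∈ g.support, tos d ≤ tos (u (φ n₀)) := by
    intro d hd
    have hdne : MvPolynomial.coeff d g ≠ 0 := MvPolynomial.mem_support_iff.mp hd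
    by_cases hdf : MvPolynomial.coeff d (f (φ n₀)) ≠ 0
    · exact hule (φ n₀) d (MvPolynomial.mem_support_iff.mpr hdf)
    · push_neg at hdf
      have : ∃ i : Fin n₀, MvPolynomial.coeff d (h i) ≠ 0 := by
        by_contra hall
        push_neg at hall
        apply hdne
        rw [hg, MvPolynomial.coeff_sub, MvPolynomial.coeff_sum, hdf]
        simp [hall]
      obtain ⟨i, hi⟩ := this
      have hdsupp : d ∈ (h i).support := MvPolynomial.mem_support_iff.mpr hi
      have := MvPolynomial.support_mul _ _ hdsupp
      rw [Finset.mem_add] at this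
      obtain ⟨s, hs, e, he, rfl⟩ := this
      have hsv : s = v i := by
        have := MvPolynomial.support_monomial_subset hs
        simpa using this
      rw [MvPolynomial.support_rename_of_injective (hσinj i), Finset.mem_image] at he
      obtain ⟨e', he', rfl⟩ := he
      rw [hmapeq i e' he']
      have h1 : tos e' ≤ tos (u (φ (i : ℕ))) := hule (φ (i : ℕ)) e' he'
      have h2 : tos (Finsupp.mapDomain (Prod.map id (π i)) e') ≤
          tos (Finsupp.mapDomain (Prod.map id (π i)) (u (φ (i : ℕ)))) :=
        (tos_mapDomain_le_iff (π i) (hπS i) _ _).mpr h1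
      calc tos (s + Finsupp.mapDomain (Prod.map id (π i)) e')
          = tos s + tos (Finsupp.mapDomain (Prod.map id (π i)) e') := tos_add _ _
        _ ≤ tos s + tos (Finsupp.mapDomain (Prod.map id (π i)) (u (φ (i : ℕ)))) := by
            exact add_le_add_right h2 _
        _ = tos (s + Finsupp.mapDomain (Prod.map id (π i)) (u (φ (i : ℕ)))) := (tos_add _ _).symm
        _ = tos (u (φ n₀)) := by rw [hsv, hvsum i]
  -- contradiction with minimality
  have hlt : degB g < degB (f (φ n₀)) := by
    rw [hudeg (φ n₀)]
    exact degB_lt hcoeff hsupp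
  exact hfmin (φ n₀) g ⟨hgJ1, hgJ0⟩ hlt
end

section
/- Let K be a field and consider the k-factor model map: for a finite set S, send a pair (A, D) with A ∈ K^{S × [k]} and D ∈ K^S to the symmetric matrix Σ ∈ K^{S × S} with Σ_{ij} = Σ_{m=1}^{k} A_{im} A_{jm} + δ_{ij} D_i. Then every off-diagonal (k+2)×(k+2) minor of Σ vanishes, i.e., for any rows i₁,…,i_{k+2} and columns j₁,…,j_{k+2} with all of i₁,…,i_{k+2}, j₁,…,j_{k+2} pairwise distinct, the determinant of the submatrix (Σ_{i_a j_b})_{a,b} is zero. -/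
/-- Off-diagonal minors of the `k`-factor model vanish: if
`Σ_{ij} = Σ_{m} A_{im} A_{jm} + δ_{ij} D_i`, then for any rows `i₁,…,i_{k+2}`
and columns `j₁,…,j_{k+2}` which are all pairwise distinct, the corresponding
`(k+2) × (k+2)` minor of `Σ` is zero. -/
theorem factor_model_offdiag_minors_vanish {K S : Type*} [Field K] [Fintype S]
    [DecidableEq S] {k : ℕ} (A : S → Fin k → K) (D : S → K)
    (Sig : Matrix S S K)
    (hSig : ∀ i j, Sig i j = (∑ m, A i m * A j m) + if i = j then D i else 0)
    (r c : Fin (k + 2) → S)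
    (hdistinct : Function.Injective (Sum.elim r c : Fin (k + 2) ⊕ Fin (k + 2) → S)) :
    (Matrix.of fun a b => Sig (r a) (c b)).det = 0 := by
  set B : Matrix (Fin (k + 2)) (Fin (k + 2)) K :=
    Matrix.of fun a b => if h : (b : ℕ) < k then A (r a) ⟨b, h⟩ else 0 with hB
  set C : Matrix (Fin (k + 2)) (Fin (k + 2)) K :=
    Matrix.of fun a b => if h : (a : ℕ) < k then A (c b) ⟨a, h⟩ else 0 with hC
  have hM : (Matrix.of fun a b => Sig (r a) (c b)) = B * C := by
    ext a b
    have hne : r a ≠ c b := fun h => by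
      have := hdistinct (a₁ := Sum.inl a) (a₂ := Sum.inr b) h
      simp at this
    simp only [Matrix.of_apply, hSig, if_neg hne, add_zero, Matrix.mul_apply, hB, hC,
      Matrix.of_apply]
    have hterm : ∀ j : Fin (k + 2),
        (if h : (j : ℕ) < k then A (r a) ⟨j, h⟩ else 0) *
        (if h : (j : ℕ) < k then A (c b) ⟨j, h⟩ else 0) =
        (fun n : ℕ => if h : n < k then A (r a) ⟨n, h⟩ * A (c b) ⟨n, h⟩ else 0) (j : ℕ) := by
      intro j
      by_cases h : (j : ℕ) < k <;> simp [h]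
    rw [Finset.sum_congr rfl (fun j _ => hterm j),
      Fin.sum_univ_eq_sum_range (fun n => if h : n < k then A (r a) ⟨n, h⟩ * A (c b) ⟨n, h⟩ else 0),
      ← Finset.sum_subset (Finset.range_subset_range.mpr (by omega : k ≤ k + 2))
        (fun x _ hx => dif_neg (by simpa using hx))]
    refine Finset.sum_bij (fun (m : Fin k) _ => (m : ℕ)) ?_ ?_ ?_ ?_
    · intro m _; exact Finset.mem_range.mpr m.2
    · intro m _ m' _ h; exact Fin.ext h
    · intro n hn; exact ⟨⟨n, Finset.mem_range.mp hn⟩, Finset.mem_univ _, rfl⟩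
    · intro m _; rw [dif_pos m.2]
  rw [hM, Matrix.det_mul]
  have : B.det = 0 := by
    apply Matrix.det_eq_zero_of_column_eq_zero (⟨k + 1, by omega⟩ : Fin (k + 2))
    intro i
    simp [hB]
  rw [this, zero_mul]
end
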